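/- arXiv:2309.01583 — 4 statements merged into one kernel-verified Lean document; each statement's English description precedes it below -/
import Mathlib

section
/- For every finite simple graph G, the game chromatic number is at most the game chromatic number with blanks: χ_g(G) ≤ χ_gb(G). -/
open Function

namespace GameCol

variable {V : Type*} [Fintype V] [DecidableEq V]

/-- A finite set of vertices is independent in `G`. -/
def IsIndepF (G : SimpleGraph V) (s : Finset V) : Prop :=
  ∀ u ∈ s, ∀ v ∈ s, ¬ G.Adj u v

/-! ### The vertex colouring game.

A position is a partial proper colouring `f : V → Option ℕ` (`none` = uncoloured);
the palette consists of the `k` colours `0, …, k-1`.  The `Bool` records whose turn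
it is (`true` = Maker).  Players alternate, Maker moving first, always making a legal
move if one exists; the game ends when the player to move has no legal move, and
Maker wins if and only if the whole graph is then coloured. -/

/-- Colour `c` may legally be played at `v`. -/
def ColLegal (G : SimpleGraph V) (k : ℕ) (f : V → Option ℕ) (v : V) (c : ℕ) : Prop :=
  c < k ∧ f v = none ∧ ∀ u, G.Adj v u → f u ≠ some c

/-- Every vertex is coloured. -/
def FullC (f : V → Option ℕ) : Prop := ∀ v, f v ≠ none

/-- Maker wins the vertex colouring game from the given position with optimal play
(`fuel` is an upper bound on the number of remaining moves). -/
def MakerWinsC (G : SimpleGraph V) (k : ℕ) : ℕ → (V → Option ℕ) → Bool → Prop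
  | 0, f, _ => FullC f
  | fuel + 1, f, true => FullC f ∨
      ∃ v c, ColLegal G k f v c ∧ MakerWinsC G k fuel (update f v (some c)) false
  | fuel + 1, f, false => FullC f ∨
      ((∃ v c, ColLegal G k f v c) ∧
        ∀ v c, ColLegal G k f v c → MakerWinsC G k fuel (update f v (some c)) true)

/-- The game chromatic number `χ_g(G)`: the least number of colours for which Maker
has a winning strategy in the vertex colouring game. -/
noncomputable def gameChromaticNumber (G : SimpleGraph V) : ℕ :=
  sInf {k | MakerWinsC G k (Fintype.card V) (fun _ => none) true}

/-! ### The vertex colouring game with blanks.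

Positions are `f : V → Option (Option ℕ)`: `none` = unplayed, `some none` = blank,
`some (some c)` = coloured with colour `c`.  The palette is a finite set `K ⊆ ℕ` of
colours.  On her turn Maker must play a colour; on his turn Breaker may play a colour,
or a blank at any unplayed vertex.  The game ends as soon as no vertex can legally
receive a colour, and Maker wins iff every vertex is then coloured or blank. -/

/-- Colour `c` may legally be played at `v` (blanks put no restriction on their
neighbours). -/
def BColLegal (G : SimpleGraph V) (K : Finset ℕ) (f : V → Option (Option ℕ))
    (v : V) (c : ℕ) : Prop :=
  c ∈ K ∧ f v = none ∧ ∀ u, G.Adj v u → f u ≠ some (some c)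

/-- Every vertex is coloured or blank. -/
def AllPlayed (f : V → Option (Option ℕ)) : Prop := ∀ v, f v ≠ none

/-- Maker wins the vertex colouring game with blanks from the given position. -/
def MakerWinsB (G : SimpleGraph V) (K : Finset ℕ) :
    ℕ → (V → Option (Option ℕ)) → Bool → Prop
  | 0, f, _ => AllPlayed f
  | fuel + 1, f, true => AllPlayed f ∨
      ∃ v c, BColLegal G K f v c ∧ MakerWinsB G K fuel (update f v (some (some c))) false
  | fuel + 1, f, false =>
      ((¬ ∃ v c, BColLegal G K f v c) ∧ AllPlayed f) ∨
      ((∃ v c, BColLegal G K f v c) ∧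
        (∀ v c, BColLegal G K f v c →
          MakerWinsB G K fuel (update f v (some (some c))) true) ∧
        (∀ v, f v = none → MakerWinsB G K fuel (update f v (some none)) true))

/-- The game chromatic number with blanks `χ_gb(G)`: the least number of colours for
which Maker has a winning strategy in the vertex colouring game with blanks. -/
noncomputable def chiGb (G : SimpleGraph V) : ℕ :=
  sInf {k | MakerWinsB G (Finset.range k) (Fintype.card V) (fun _ => none) true}

/-! ### The game with blanks, with classes marked for blanks.

The extra datum is the finite set `ds` of currently marked classes.  Maker may also
play blanks at unplayed vertices of marked classes; the game does not end while some
vertex of a marked class is unplayed; and whenever Breaker plays a blank at `v` he may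
additionally remove one marked class not containing `v`. -/

/-- `v` belongs to some class marked for blanks. -/
def InMarked (ds : Finset (Finset V)) (v : V) : Prop := ∃ d ∈ ds, v ∈ d

/-- The game has ended: no colour move is available and no vertex of a class marked
for blanks is left unplayed. -/
def MEnded (G : SimpleGraph V) (K : Finset ℕ) (f : V → Option (Option ℕ))
    (ds : Finset (Finset V)) : Prop :=
  (¬ ∃ v c, BColLegal G K f v c) ∧ ∀ v, InMarked ds v → f v ≠ none

/-- Maker wins the vertex colouring game with blanks, with the classes `ds` marked
for blanks, from the given position. -/
def MakerWinsM (G : SimpleGraph V) (K : Finset ℕ) :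
    ℕ → (V → Option (Option ℕ)) → Finset (Finset V) → Bool → Prop
  | 0, f, _, _ => AllPlayed f
  | fuel + 1, f, ds, true =>
      (MEnded G K f ds ∧ AllPlayed f) ∨
      (¬ MEnded G K f ds ∧
        ((∃ v c, BColLegal G K f v c ∧
            MakerWinsM G K fuel (update f v (some (some c))) ds false) ∨
         (∃ v, f v = none ∧ InMarked ds v ∧
            MakerWinsM G K fuel (update f v (some none)) ds false)))
  | fuel + 1, f, ds, false =>
      (MEnded G K f ds ∧ AllPlayed f) ∨
      (¬ MEnded G K f ds ∧
        (∀ v c, BColLegal G K f v c →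
          MakerWinsM G K fuel (update f v (some (some c))) ds true) ∧
        (∀ v, f v = none →
          MakerWinsM G K fuel (update f v (some none)) ds true ∧
          ∀ d ∈ ds, v ∉ d →
            MakerWinsM G K fuel (update f v (some none)) (ds.erase d) true))

/-- `χ_gb(G; D₁,…,Dₛ)`: the least number of colours for which Maker has a winning
strategy in the vertex colouring game with blanks with the classes in `ds` marked for
blanks. -/
noncomputable def chiGbM (G : SimpleGraph V) (ds : Finset (Finset V)) : ℕ :=
  sInf {k | MakerWinsM G (Finset.range k) (Fintype.card V) (fun _ => none) ds true}

/-! ### Move sequences, for conditioning the game on an initial sequence of plays. -/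

/-- A move in the game with blanks: a colour at a vertex, or a blank at a vertex
together with an optional marked class which Breaker removes. -/
inductive BMove (W : Type*) where
  | color (v : W) (c : ℕ)
  | blank (v : W) (removed : Option (Finset W))
  deriving DecidableEq

/-- The vertex at which a move is made. -/
def BMove.vertex {W : Type*} : BMove W → W
  | .color v _ => v
  | .blank v _ => v

/-- The effect of a single move on a position. -/
def bStep (st : (V → Option (Option ℕ)) × Finset (Finset V)) :
    BMove V → (V → Option (Option ℕ)) × Finset (Finset V)
  | .color v c => (update st.1 v (some (some c)), st.2)
  | .blank v none => (update st.1 v (some none), st.2)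
  | .blank v (some d) => (update st.1 v (some none), st.2.erase d)

/-- The position reached after the sequence `P` of moves. -/
def bRun (st : (V → Option (Option ℕ)) × Finset (Finset V)) (P : List (BMove V)) :
    (V → Option (Option ℕ)) × Finset (Finset V) :=
  P.foldl bStep st

/-- `P` is a legal sequence of moves from the given position in the game with blanks
with marked classes (the `Bool` is the player to move, `true` = Maker). -/
def LegalSeqM (G : SimpleGraph V) (K : Finset ℕ) :
    (V → Option (Option ℕ)) → Finset (Finset V) → Bool → List (BMove V) → Prop
  | _, _, _, [] => True
  | f, ds, true, BMove.color v c :: rest =>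
      ¬ MEnded G K f ds ∧ BColLegal G K f v c ∧
        LegalSeqM G K (update f v (some (some c))) ds false rest
  | f, ds, true, BMove.blank v r :: rest =>
      ¬ MEnded G K f ds ∧ f v = none ∧ InMarked ds v ∧ r = none ∧
        LegalSeqM G K (update f v (some none)) ds false rest
  | f, ds, false, BMove.color v c :: rest =>
      ¬ MEnded G K f ds ∧ BColLegal G K f v c ∧
        LegalSeqM G K (update f v (some (some c))) ds true rest
  | f, ds, false, BMove.blank v none :: rest =>
      ¬ MEnded G K f ds ∧ f v = none ∧
        LegalSeqM G K (update f v (some none)) ds true rest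
  | f, ds, false, BMove.blank v (some d) :: rest =>
      ¬ MEnded G K f ds ∧ f v = none ∧ d ∈ ds ∧ v ∉ d ∧
        LegalSeqM G K (update f v (some none)) (ds.erase d) true rest

/-- `χ_gb(G; ds | P)`: the least number of colours for which Maker has a winning
strategy in the vertex colouring game with blanks with the classes `ds` marked for
blanks, conditioned on the game starting with the sequence `P` of moves. -/
noncomputable def chiGbMCond (G : SimpleGraph V) (ds : Finset (Finset V))
    (P : List (BMove V)) : ℕ :=
  sInf {n | ∃ K : Finset ℕ, K.card = n ∧
    LegalSeqM G K (fun _ => none) ds true P ∧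
    MakerWinsM G K (Fintype.card V - P.length) (bRun (fun _ => none, ds) P).1
      (bRun (fun _ => none, ds) P).2 (decide (P.length % 2 = 0))}

/-! ### The marking game. -/

/-- `v` may legally be marked: it is unmarked and has at most `k - 1` marked
neighbours. -/
def MarkLegal (G : SimpleGraph V) (k : ℕ) (M : Set V) (v : V) : Prop :=
  v ∉ M ∧ (M ∩ {u | G.Adj v u}).ncard < k

/-- Maker wins the marking game from the given position. -/
def MakerWinsMark (G : SimpleGraph V) (k : ℕ) : ℕ → Set V → Bool → Prop
  | 0, M, _ => ∀ v, v ∈ M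
  | fuel + 1, M, true => (∀ v, v ∈ M) ∨
      ∃ v, MarkLegal G k M v ∧ MakerWinsMark G k fuel (insert v M) false
  | fuel + 1, M, false => (∀ v, v ∈ M) ∨
      ((∃ v, MarkLegal G k M v) ∧
        ∀ v, MarkLegal G k M v → MakerWinsMark G k fuel (insert v M) true)

/-- The marking number (game colouring number) `m(G)`: the least `k` for which Maker
has a winning strategy in the marking game. -/
noncomputable def markingNumber (G : SimpleGraph V) : ℕ :=
  sInf {k | MakerWinsMark G k (Fintype.card V) ∅ true}


lemma map_update (f : V → Option ℕ) (v : V) (c : ℕ) :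
    update (fun x => (f x).map some) v (some (some c))
      = fun x => ((update f v (some c)) x).map some := by
  funext x
  by_cases h : x = v <;> simp [h, update]

lemma colLegal_iff (G : SimpleGraph V) (k : ℕ) (f : V → Option ℕ) (v : V) (c : ℕ) :
    BColLegal G (Finset.range k) (fun x => (f x).map some) v c ↔ ColLegal G k f v c := by
  unfold BColLegal ColLegal
  simp [Option.map_eq_none_iff, Option.map_eq_some_iff, Finset.mem_range]

lemma winsB_to_winsC (G : SimpleGraph V) (k : ℕ) :
    ∀ fuel (f : V → Option ℕ) (b : Bool),
      MakerWinsB G (Finset.range k) fuel (fun x => (f x).map some) b →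
      MakerWinsC G k fuel f b := by
  intro fuel
  induction fuel with
  | zero =>
    intro f b h v
    have := h v
    simpa [Option.map_eq_none_iff] using this
  | succ n ih =>
    intro f b h
    cases b with
    | true =>
      rcases h with h | ⟨v, c, hl, hw⟩
      · exact Or.inl (fun v => by simpa [Option.map_eq_none_iff] using h v)
      · refine Or.inr ⟨v, c, (colLegal_iff G k f v c).mp hl, ih _ false ?_⟩
        rwa [map_update] at hw
    | false =>
      rcases h with ⟨_, h⟩ | ⟨⟨v, c, hl⟩, hcol, _⟩
      · exact Or.inl (fun v => by simpa [Option.map_eq_none_iff] using h v)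
      · refine Or.inr ⟨⟨v, c, (colLegal_iff G k f v c).mp hl⟩, fun v c hc => ?_⟩
        refine ih _ true ?_
        rw [← map_update]
        exact hcol v c ((colLegal_iff G k f v c).mpr hc)

lemma exists_legal (G : SimpleGraph V) (f : V → Option (Option ℕ)) (v : V)
    (hv : f v = none) :
    ∃ c, BColLegal G (Finset.range (Fintype.card V)) f v c := by
  classical
  set N : Finset V := Finset.univ.filter (fun u => G.Adj v u) with hN
  set bad : Finset ℕ := N.image (fun u => ((f u).getD none).getD 0) with hbad
  have hvN : v ∉ N := by simp [hN]
  have hNcard : N.card < Fintype.card V := by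
    have : N ⊂ Finset.univ := Finset.ssubset_univ_iff.mpr (fun h => hvN (h ▸ Finset.mem_univ v))
    simpa [Finset.card_univ] using Finset.card_lt_card this
  have hcard : bad.card < (Finset.range (Fintype.card V)).card := by
    calc bad.card ≤ N.card := Finset.card_image_le
    _ < _ := by simpa using hNcard
  have hns : ¬ Finset.range (Fintype.card V) ⊆ bad :=
    fun hsub => absurd (Finset.card_le_card hsub) (by omega)
  obtain ⟨c, hc1, hc2⟩ := Finset.not_subset.mp hns
  refine ⟨c, hc1, hv, fun u hu hfu => hc2 ?_⟩
  refine Finset.mem_image.mpr ⟨u, ?_, by simp [hfu]⟩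
  simp [hN, hu]

lemma count_update (f : V → Option (Option ℕ)) (v : V) (hv : f v = none)
    (x : Option ℕ) {fuel : ℕ}
    (h : (Finset.univ.filter (fun u => f u = none)).card ≤ fuel + 1) :
    (Finset.univ.filter (fun u => update f v (some x) u = none)).card ≤ fuel := by
  classical
  have hset : Finset.univ.filter (fun u => update f v (some x) u = none)
      = (Finset.univ.filter (fun u => f u = none)).erase v := by
    ext u
    by_cases hu : u = v <;> simp [hu, update, hv]
  have hvmem : v ∈ Finset.univ.filter (fun u => f u = none) := by simp [hv]
  rw [hset, Finset.card_erase_of_mem hvmem]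
  omega

lemma winsB_full (G : SimpleGraph V) :
    ∀ fuel (f : V → Option (Option ℕ)) (b : Bool),
      (Finset.univ.filter (fun v => f v = none)).card ≤ fuel →
      MakerWinsB G (Finset.range (Fintype.card V)) fuel f b := by
  intro fuel
  induction fuel with
  | zero =>
    intro f b h v hv
    have : v ∈ Finset.univ.filter (fun u => f u = none) := by simp [hv]
    rw [Nat.le_zero, Finset.card_eq_zero] at h
    simp [h] at this
  | succ n ih =>
    intro f b hcount
    cases b with
    | true =>
      by_cases hall : AllPlayed f
      · exact Or.inl hall
      · simp only [AllPlayed, not_forall, not_not] at hall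
        obtain ⟨v, hv⟩ := hall
        obtain ⟨c, hc⟩ := exists_legal G f v hv
        exact Or.inr ⟨v, c, hc, ih _ false (count_update f v hv (some c) hcount)⟩
    | false =>
      by_cases hex : ∃ v c, BColLegal G (Finset.range (Fintype.card V)) f v c
      · refine Or.inr ⟨hex, fun v c hl => ih _ true (count_update f v hl.2.1 (some c) hcount),
          fun v hv => ih _ true (count_update f v hv none hcount)⟩
      · refine Or.inl ⟨hex, fun v hv => ?_⟩
        obtain ⟨c, hc⟩ := exists_legal G f v hv
        exact hex ⟨v, c, hc⟩

/-- For every finite simple graph `G`, `χ_g(G) ≤ χ_gb(G)`. -/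
theorem gameChromatic_le_chiGb {V : Type*} [Fintype V] [DecidableEq V]
    (G : SimpleGraph V) :
    gameChromaticNumber G ≤ chiGb G := by
  classical
  have hT : MakerWinsB G (Finset.range (Fintype.card V)) (Fintype.card V)
      (fun _ : V => none) true := winsB_full G _ _ _ (by simp [Finset.card_univ])
  have hne : {k | MakerWinsB G (Finset.range k) (Fintype.card V)
      (fun _ : V => none) true}.Nonempty := ⟨Fintype.card V, hT⟩
  have hmem := Nat.sInf_mem hne
  have hwin : MakerWinsC G (chiGb G) (Fintype.card V) (fun _ : V => none) true := by
    refine winsB_to_winsC G _ _ (fun _ => none) true ?_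
    have : (fun x : V => ((fun _ : V => (none : Option ℕ)) x).map some)
        = fun _ : V => (none : Option (Option ℕ)) := by funext x; simp
    rw [this]
    exact hmem
  exact Nat.sInf_le hwin

end GameCol
end

section
/- Let r ≥ 3 and let G be a proper spanning subgraph of the Turán graph T(2r,r) on 2r vertices (so G has the same vertex set as T(2r,r), the r parts of size 2 are independent sets of G, and G omits at least one edge of T(2r,r)). Then χ_gb(G) ≤ 2r − 2. -/
open Function

namespace GameCol

variable {V : Type*} [Fintype V] [DecidableEq V]

section Auxiliary
open Finset
set_option linter.unusedSectionVars false

/-- partner -/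
def ptn (r : ℕ) (v : Fin (2 * r)) : Fin (2 * r) :=
  ⟨if v.val < r then v.val + r else v.val - r, by have := v.isLt; split_ifs <;> omega⟩

lemma ptn_ne (r : ℕ) (v : Fin (2 * r)) : ptn r v ≠ v := by
  have := v.isLt
  intro h
  have h' := congrArg Fin.val h
  simp only [ptn] at h'
  split_ifs at h' <;> omega

lemma ptn_ptn (r : ℕ) (v : Fin (2 * r)) : ptn r (ptn r v) = v := by
  have := v.isLt
  apply Fin.ext
  simp only [ptn]
  split_ifs <;> omega

lemma ptn_mod (r : ℕ) (v : Fin (2 * r)) : (ptn r v : ℕ) % r = (v : ℕ) % r := by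
  have := v.isLt
  simp only [ptn]
  split_ifs with h
  · exact Nat.add_mod_right _ _
  · conv_rhs => rw [Nat.mod_eq_sub_mod (by omega)]

lemma not_adj_ptn (r : ℕ) (G : SimpleGraph (Fin (2 * r)))
    (hle : G ≤ SimpleGraph.turanGraph (2 * r) r) (v : Fin (2 * r)) :
    ¬ G.Adj v (ptn r v) := by
  intro h
  have h2 := hle h
  have : (v : ℕ) % r ≠ ((ptn r v : Fin (2*r)) : ℕ) % r := by
    simpa [SimpleGraph.turanGraph] using h2
  exact this (ptn_mod r v).symm

/-- colours of a played-coloured cell -/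
def cs : Option (Option ℕ) → Finset ℕ
  | some (some c) => {c}
  | _ => ∅

def colorsOn (f : V → Option (Option ℕ)) (s : Finset V) : Finset ℕ :=
  s.biUnion fun u => cs (f u)

lemma mem_colorsOn {f : V → Option (Option ℕ)} {s : Finset V} {c : ℕ} :
    c ∈ colorsOn f s ↔ ∃ u ∈ s, f u = some (some c) := by
  simp only [colorsOn, mem_biUnion]
  constructor
  · rintro ⟨u, hu, hc⟩
    refine ⟨u, hu, ?_⟩
    rcases h : f u with _ | o
    · simp [cs, h] at hc
    · rcases o with _ | d
      · simp [cs, h] at hc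
      · simp [cs, h] at hc; subst hc; rfl
  · rintro ⟨u, hu, hc⟩
    exact ⟨u, hu, by simp [cs, hc]⟩

lemma card_colorsOn_le (f : V → Option (Option ℕ)) (s : Finset V) :
    (colorsOn f s).card ≤ s.card := by
  refine (Finset.card_biUnion_le).trans ?_
  calc ∑ u ∈ s, (cs (f u)).card ≤ ∑ _u ∈ s, 1 := by
        refine Finset.sum_le_sum fun u _ => ?_
        rcases h : f u with _ | o
        · simp [cs]
        · rcases o with _ | d <;> simp [cs]
    _ = s.card := by simp

lemma colorsOn_erase_unc {f : V → Option (Option ℕ)} {s : Finset V} {x : V}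
    (hx : ∀ c, f x ≠ some (some c)) : colorsOn f s = colorsOn f (s.erase x) := by
  apply Finset.Subset.antisymm
  · intro c hc
    rw [mem_colorsOn] at hc ⊢
    obtain ⟨u, hu, hc⟩ := hc
    refine ⟨u, Finset.mem_erase.2 ⟨?_, hu⟩, hc⟩
    rintro rfl; exact hx c hc
  · intro c hc
    rw [mem_colorsOn] at hc ⊢
    obtain ⟨u, hu, hc⟩ := hc
    exact ⟨u, Finset.mem_of_mem_erase hu, hc⟩

lemma colorsOn_erase_dup {f : V → Option (Option ℕ)} {s : Finset V} {x y : V}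
    (hy : y ∈ s) (hxy : x ≠ y) (h : f x = f y) :
    colorsOn f s = colorsOn f (s.erase x) := by
  apply Finset.Subset.antisymm
  · intro c hc
    rw [mem_colorsOn] at hc ⊢
    obtain ⟨u, hu, hc⟩ := hc
    by_cases hux : u = x
    · exact ⟨y, Finset.mem_erase.2 ⟨hxy.symm, hy⟩, by rw [← h, ← hux]; exact hc⟩
    · exact ⟨u, Finset.mem_erase.2 ⟨hux, hu⟩, hc⟩
  · intro c hc
    rw [mem_colorsOn] at hc ⊢
    obtain ⟨u, hu, hc⟩ := hc
    exact ⟨u, Finset.mem_of_mem_erase hu, hc⟩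

/-- the number of unplayed vertices -/
def uc (f : V → Option (Option ℕ)) : ℕ := (univ.filter fun v => f v = none).card

lemma uc_update {f : V → Option (Option ℕ)} {v : V} (hv : f v = none) (o : Option ℕ) :
    uc (update f v (some o)) = uc f - 1 := by
  unfold uc
  have : (univ.filter fun u => update f v (some o) u = none)
      = (univ.filter fun u => f u = none).erase v := by
    ext u
    simp only [Finset.mem_filter, Finset.mem_erase, Finset.mem_univ, true_and,
      Function.update_apply]
    split_ifs with h
    · subst h; simp
    · simp [h]
  rw [this, Finset.card_erase_of_mem (by simp [hv])]

lemma allPlayed_of_uc {f : V → Option (Option ℕ)} (h : uc f = 0) : AllPlayed f := by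
  intro v hv
  have : v ∈ univ.filter fun u => f u = none := by simp [hv]
  rw [Finset.card_eq_zero.1 h] at this
  exact absurd this (Finset.notMem_empty v)

lemma exists_unplayed {f : V → Option (Option ℕ)} (h : 1 ≤ uc f) : ∃ v, f v = none := by
  obtain ⟨v, hv⟩ := Finset.card_pos.1 h
  exact ⟨v, (Finset.mem_filter.1 hv).2⟩

lemma exists_unplayed_ne {f : V → Option (Option ℕ)} (h : 2 ≤ uc f) (w : V) :
    ∃ v, v ≠ w ∧ f v = none := by
  obtain ⟨v, hv, hne⟩ := Finset.exists_mem_ne (s := univ.filter fun v => f v = none) h w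
  exact ⟨v, hne, (Finset.mem_filter.1 hv).2⟩


section Main

variable {r : ℕ} {G : SimpleGraph (Fin (2 * r))}

/-- key: if the colours occurring off `{v, ptn r v}` do not exhaust `K`,
then `v` can legally receive a colour. -/
lemma exists_legal_s7 (hle : G ≤ SimpleGraph.turanGraph (2 * r) r)
    {K : Finset ℕ} {f : Fin (2 * r) → Option (Option ℕ)} {v : Fin (2 * r)}
    (hv : f v = none)
    (hK : ∀ u c, f u = some (some c) → c ∈ K)
    (hcard : (colorsOn f ((univ.erase (ptn r v)).erase v)).card < K.card) :
    ∃ c, BColLegal G K f v c := by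
  set s := (univ.erase (ptn r v)).erase v with hs
  have hsub : colorsOn f s ⊆ K := by
    intro c hc
    obtain ⟨u, _, hu⟩ := mem_colorsOn.1 hc
    exact hK u c hu
  obtain ⟨c, hcK, hcT⟩ : ∃ c ∈ K, c ∉ colorsOn f s := by
    by_contra hcon
    push_neg at hcon
    exact absurd (Finset.card_le_card fun c hc => hcon c hc) (by omega)
  refine ⟨c, hcK, hv, fun u hadj hu => hcT ?_⟩
  rw [mem_colorsOn]
  refine ⟨u, ?_, hu⟩
  rw [hs]
  refine Finset.mem_erase.2 ⟨(G.ne_of_adj hadj).symm, Finset.mem_erase.2 ⟨?_, Finset.mem_univ u⟩⟩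
  rintro rfl
  exact not_adj_ptn r G hle v hadj

lemma card_offpart (hr : 3 ≤ r) (v : Fin (2 * r)) :
    ((univ.erase (ptn r v)).erase v).card = 2 * r - 2 := by
  rw [Finset.card_erase_of_mem
      (Finset.mem_erase.2 ⟨fun h => ptn_ne r v h.symm, Finset.mem_univ v⟩),
    Finset.card_erase_of_mem (Finset.mem_univ _)]
  simp only [Finset.card_univ, Fintype.card_fin]
  omega

/-- membership of a played vertex `x ∉ {v, ptn v}` in the off-part set of `v` -/
lemma mem_offpart {f : Fin (2 * r) → Option (Option ℕ)} {v x : Fin (2 * r)}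
    (hv : f v = none) (hx : f x ≠ none) (hpx : f (ptn r x) ≠ none) :
    x ∈ (univ.erase (ptn r v)).erase v := by
  refine Finset.mem_erase.2 ⟨?_, Finset.mem_erase.2 ⟨?_, Finset.mem_univ x⟩⟩
  · rintro rfl; exact hx hv
  · rintro rfl; exact hpx (by rw [ptn_ptn]; exact hv)

/-- **Phase W**: some part is completely played and is deficient
(contains a blank or is monochromatic).  Then Maker wins. -/
lemma winW (hr : 3 ≤ r) (hle : G ≤ SimpleGraph.turanGraph (2 * r) r) :
    ∀ fuel (f : Fin (2 * r) → Option (Option ℕ)) (turn : Bool),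
      uc f = fuel →
      (∀ u c, f u = some (some c) → c ∈ Finset.range (2 * r - 2)) →
      (∃ x, f x ≠ none ∧ f (ptn r x) ≠ none ∧
        (f x = some none ∨ f (ptn r x) = some none ∨
          ∃ d, f x = some (some d) ∧ f (ptn r x) = some (some d))) →
      MakerWinsB G (Finset.range (2 * r - 2)) fuel f turn := by
  intro fuel
  induction fuel with
  | zero =>
    intro f turn h0 _ _
    exact allPlayed_of_uc h0
  | succ n ih =>
    intro f turn hfu hK hdef
    obtain ⟨x, hx1, hx2, hx3⟩ := hdef
    -- every unplayed vertex is colourable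
    have hexl : ∀ v, f v = none → ∃ c, BColLegal G (Finset.range (2 * r - 2)) f v c := by
      intro v hv
      refine exists_legal_s7 hle hv hK ?_
      have hxs : x ∈ (univ.erase (ptn r v)).erase v := mem_offpart hv hx1 hx2
      have hpxs : ptn r x ∈ (univ.erase (ptn r v)).erase v := by
        have := mem_offpart (x := ptn r x) hv hx2 (by rw [ptn_ptn]; exact hx1)
        exact this
      have hne : x ≠ ptn r x := fun h => ptn_ne r x h.symm
      have hkey : ∃ y ∈ (univ.erase (ptn r v)).erase v,
          colorsOn f ((univ.erase (ptn r v)).erase v)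
            = colorsOn f (((univ.erase (ptn r v)).erase v).erase y) := by
        rcases hx3 with h | h | ⟨d, hd1, hd2⟩
        · exact ⟨x, hxs, colorsOn_erase_unc (by simp [h])⟩
        · exact ⟨ptn r x, hpxs, colorsOn_erase_unc (by simp [h])⟩
        · exact ⟨x, hxs, colorsOn_erase_dup hpxs hne (by rw [hd1, hd2])⟩
      obtain ⟨y, hy, hcoleq⟩ := hkey
      have h1 : (colorsOn f (((univ.erase (ptn r v)).erase v).erase y)).card
          ≤ 2 * r - 3 := by
        refine (card_colorsOn_le _ _).trans ?_
        rw [Finset.card_erase_of_mem hy, card_offpart hr]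
        omega
      rw [hcoleq, Finset.card_range]
      omega
    -- preservation of the deficient part under any move
    have hpres : ∀ (v : Fin (2 * r)) (o : Option ℕ), f v = none →
        (update f v (some o)) x ≠ none ∧ (update f v (some o)) (ptn r x) ≠ none ∧
        ((update f v (some o)) x = some none ∨ (update f v (some o)) (ptn r x) = some none ∨
          ∃ d, (update f v (some o)) x = some (some d) ∧
            (update f v (some o)) (ptn r x) = some (some d)) := by
      intro v o hv
      have e1 : update f v (some o) x = f x :=
        Function.update_of_ne (by rintro rfl; exact hx1 hv) _ _
      have e2 : update f v (some o) (ptn r x) = f (ptn r x) :=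
        Function.update_of_ne (by rintro rfl; exact hx2 hv) _ _
      rw [e1, e2]
      exact ⟨hx1, hx2, hx3⟩
    have hKpres : ∀ (v : Fin (2 * r)) (o : Option ℕ),
        (o = none ∨ ∃ c0 ∈ Finset.range (2 * r - 2), o = some c0) →
        ∀ u c, (update f v (some o)) u = some (some c) → c ∈ Finset.range (2 * r - 2) := by
      intro v o ho u c hu
      rcases eq_or_ne u v with rfl | hne
      · rw [Function.update_self] at hu
        rcases ho with rfl | ⟨c0, hc0, rfl⟩
        · exact absurd hu (by simp)
        · obtain rfl : c0 = c := by simpa using hu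
          exact hc0
      · rw [Function.update_of_ne hne] at hu
        exact hK u c hu
    have hucp : ∀ (v : Fin (2 * r)) (o : Option ℕ), f v = none →
        uc (update f v (some o)) = n := by
      intro v o hv
      rw [uc_update hv]
      omega
    obtain ⟨v0, hv0⟩ := exists_unplayed (f := f) (by omega)
    obtain ⟨c0, hc0⟩ := hexl v0 hv0
    cases turn with
    | true =>
      simp only [MakerWinsB]
      refine Or.inr ⟨v0, c0, hc0, ih _ false (hucp v0 _ hv0)
        (hKpres v0 _ (Or.inr ⟨c0, hc0.1, rfl⟩)) ⟨x, hpres v0 _ hv0⟩⟩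
    | false =>
      simp only [MakerWinsB]
      refine Or.inr ⟨⟨v0, c0, hc0⟩, ?_, ?_⟩
      · intro v c hvc
        exact ih _ true (hucp v _ hvc.2.1) (hKpres v _ (Or.inr ⟨c, hvc.1, rfl⟩))
          ⟨x, hpres v _ hvc.2.1⟩
      · intro v hv
        exact ih _ true (hucp v _ hv) (hKpres v _ (Or.inl rfl)) ⟨x, hpres v _ hv⟩


lemma ptn_inj {x y : Fin (2 * r)} (h : ptn r x = ptn r y) : x = y := by
  have := congrArg (ptn r) h
  rwa [ptn_ptn, ptn_ptn] at this

/-- **Phase 2**: `a` and `b` are two distinct vertices coloured with the same colour.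
Maker wins provided the partners of `a` and `b` have been dealt with early enough. -/
lemma winP2 (hr : 3 ≤ r) (hle : G ≤ SimpleGraph.turanGraph (2 * r) r)
    (a b : Fin (2 * r)) (hab : a ≠ b) (c₀ : ℕ) :
    ∀ fuel (f : Fin (2 * r) → Option (Option ℕ)) (turn : Bool),
      uc f = fuel →
      (∀ u c, f u = some (some c) → c ∈ Finset.range (2 * r - 2)) →
      f a = some (some c₀) → f b = some (some c₀) →
      (f (ptn r a) = none → f (ptn r b) = none → (if turn then 4 else 5) ≤ fuel) →
      ((f (ptn r a) = none ∨ f (ptn r b) = none) → (if turn then 2 else 3) ≤ fuel) →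
      MakerWinsB G (Finset.range (2 * r - 2)) fuel f turn := by
  intro fuel
  induction fuel with
  | zero =>
    intro f turn h0 _ _ _ _ _
    exact allPlayed_of_uc h0
  | succ n ih =>
    intro f turn hfu hK ha hb hp1 hp2
    -- colourability of a non-pending unplayed vertex
    have hcolw : ∀ w, f w = none → w ≠ ptn r a → w ≠ ptn r b →
        ∃ c, BColLegal G (Finset.range (2 * r - 2)) f w c := by
      intro w hw hwa hwb
      refine exists_legal_s7 hle hw hK ?_
      have has : a ∈ (univ.erase (ptn r w)).erase w := by
        refine Finset.mem_erase.2 ⟨?_, Finset.mem_erase.2 ⟨?_, Finset.mem_univ a⟩⟩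
        · rintro rfl; rw [ha] at hw; exact absurd hw (by simp)
        · rintro rfl; exact hwa (ptn_ptn r w).symm
      have hbs : b ∈ (univ.erase (ptn r w)).erase w := by
        refine Finset.mem_erase.2 ⟨?_, Finset.mem_erase.2 ⟨?_, Finset.mem_univ b⟩⟩
        · rintro rfl; rw [hb] at hw; exact absurd hw (by simp)
        · rintro rfl; exact hwb (ptn_ptn r w).symm
      have hcoleq : colorsOn f ((univ.erase (ptn r w)).erase w)
          = colorsOn f (((univ.erase (ptn r w)).erase w).erase a) :=
        colorsOn_erase_dup hbs hab (by rw [ha, hb])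
      have h1 : (colorsOn f (((univ.erase (ptn r w)).erase w).erase a)).card ≤ 2 * r - 3 := by
        refine (card_colorsOn_le _ _).trans ?_
        rw [Finset.card_erase_of_mem has, card_offpart hr]
        omega
      rw [hcoleq, Finset.card_range]
      omega
    -- colourability of any unplayed vertex given another unplayed vertex
    have hcolx : ∀ p x, f p = none → f x = none → x ≠ p → x ≠ ptn r p →
        ∃ c, BColLegal G (Finset.range (2 * r - 2)) f p c := by
      intro p x hp hx hxp hxpp
      refine exists_legal_s7 hle hp hK ?_
      have hxs : x ∈ (univ.erase (ptn r p)).erase p :=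
        Finset.mem_erase.2 ⟨hxp, Finset.mem_erase.2 ⟨hxpp, Finset.mem_univ x⟩⟩
      have hcoleq : colorsOn f ((univ.erase (ptn r p)).erase p)
          = colorsOn f (((univ.erase (ptn r p)).erase p).erase x) :=
        colorsOn_erase_unc (by simp [hx])
      have h1 : (colorsOn f (((univ.erase (ptn r p)).erase p).erase x)).card ≤ 2 * r - 3 := by
        refine (card_colorsOn_le _ _).trans ?_
        rw [Finset.card_erase_of_mem hxs, card_offpart hr]
        omega
      rw [hcoleq, Finset.card_range]
      omega
    have hane : ∀ v, f v = none → v ≠ a := by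
      rintro v hv rfl; rw [ha] at hv; exact absurd hv (by simp)
    have hbne : ∀ v, f v = none → v ≠ b := by
      rintro v hv rfl; rw [hb] at hv; exact absurd hv (by simp)
    have hKpres : ∀ (v : Fin (2 * r)) (o : Option ℕ),
        (o = none ∨ ∃ c1 ∈ Finset.range (2 * r - 2), o = some c1) →
        ∀ u c, (update f v (some o)) u = some (some c) → c ∈ Finset.range (2 * r - 2) := by
      intro v o ho u c hu
      rcases eq_or_ne u v with rfl | hne
      · rw [Function.update_self] at hu
        rcases ho with rfl | ⟨c1, hc1, rfl⟩
        · exact absurd hu (by simp)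
        · obtain rfl : c1 = c := by simpa using hu
          exact hc1
      · rw [Function.update_of_ne hne] at hu
        exact hK u c hu
    have hucp : ∀ (v : Fin (2 * r)) (o : Option ℕ), f v = none →
        uc (update f v (some o)) = n := by
      intro v o hv
      rw [uc_update hv]
      omega
    have habp : ∀ (v : Fin (2 * r)) (o : Option ℕ), f v = none →
        (update f v (some o)) a = some (some c₀) ∧
        (update f v (some o)) b = some (some c₀) := by
      intro v o hv
      rw [Function.update_of_ne (fun h => (hane v hv) h.symm),
        Function.update_of_ne (fun h => (hbne v hv) h.symm)]
      exact ⟨ha, hb⟩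
    -- going back from f' = none to f = none
    have hback : ∀ (v p : Fin (2 * r)) (o : Option ℕ),
        (update f v (some o)) p = none → f p = none := by
      intro v p o hp
      rcases eq_or_ne p v with rfl | hne
      · rw [Function.update_self] at hp; exact absurd hp (by simp)
      · rwa [Function.update_of_ne hne] at hp
    cases turn with
    | true =>
      norm_num at hp1 hp2
      by_cases hA : f (ptn r a) = none
      · -- colour `ptn r a`; there is another unplayed vertex
        have hm : 2 ≤ n + 1 := hp2 (Or.inl hA)
        obtain ⟨x, hxne, hx⟩ := exists_unplayed_ne (f := f) (by omega) (ptn r a)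
        obtain ⟨c, hc⟩ := hcolx (ptn r a) x hA hx hxne
          (by rw [ptn_ptn]; exact hane x hx)
        simp only [MakerWinsB]
        refine Or.inr ⟨ptn r a, c, hc, ?_⟩
        refine ih _ false (hucp _ _ hA) (hKpres _ _ (Or.inr ⟨c, hc.1, rfl⟩))
          (habp _ _ hA).1 (habp _ _ hA).2 ?_ ?_
        · intro h; exact absurd h (by simp [Function.update_self])
        · rintro (h | h)
          · exact absurd h (by simp [Function.update_self])
          · have hB : f (ptn r b) = none := hback _ _ _ h
            have : 4 ≤ n + 1 := hp1 hA hB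
            norm_num
            omega
      · by_cases hB : f (ptn r b) = none
        · have hm : 2 ≤ n + 1 := hp2 (Or.inr hB)
          obtain ⟨x, hxne, hx⟩ := exists_unplayed_ne (f := f) (by omega) (ptn r b)
          obtain ⟨c, hc⟩ := hcolx (ptn r b) x hB hx hxne
            (by rw [ptn_ptn]; exact hbne x hx)
          simp only [MakerWinsB]
          refine Or.inr ⟨ptn r b, c, hc, ?_⟩
          refine ih _ false (hucp _ _ hB) (hKpres _ _ (Or.inr ⟨c, hc.1, rfl⟩))
            (habp _ _ hB).1 (habp _ _ hB).2 ?_ ?_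
          · intro h1' h2'; exact absurd h2' (by simp [Function.update_self])
          · rintro (h | h)
            · have hA' : f (ptn r a) = none := hback _ _ _ h
              exact absurd hA' hA
            · exact absurd h (by simp [Function.update_self])
        · -- no pending partner: any unplayed vertex will do
          obtain ⟨w, hw⟩ := exists_unplayed (f := f) (by omega)
          have hwa : w ≠ ptn r a := by rintro rfl; exact hA hw
          have hwb : w ≠ ptn r b := by rintro rfl; exact hB hw
          obtain ⟨c, hc⟩ := hcolw w hw hwa hwb
          simp only [MakerWinsB]
          refine Or.inr ⟨w, c, hc, ?_⟩
          refine ih _ false (hucp _ _ hw) (hKpres _ _ (Or.inr ⟨c, hc.1, rfl⟩))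
            (habp _ _ hw).1 (habp _ _ hw).2 ?_ ?_
          · intro h; exact absurd (hback _ _ _ h) hA
          · rintro (h | h)
            · exact absurd (hback _ _ _ h) hA
            · exact absurd (hback _ _ _ h) hB
    | false =>
      norm_num at hp1 hp2
      -- a legal colouring move exists
      have hexists : ∃ v c, BColLegal G (Finset.range (2 * r - 2)) f v c := by
        by_cases hA : f (ptn r a) = none
        · have hm : 3 ≤ n + 1 := hp2 (Or.inl hA)
          obtain ⟨x, hxne, hx⟩ := exists_unplayed_ne (f := f) (by omega) (ptn r a)
          obtain ⟨c, hc⟩ := hcolx (ptn r a) x hA hx hxne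
            (by rw [ptn_ptn]; exact hane x hx)
          exact ⟨_, c, hc⟩
        · by_cases hB : f (ptn r b) = none
          · have hm : 3 ≤ n + 1 := hp2 (Or.inr hB)
            obtain ⟨x, hxne, hx⟩ := exists_unplayed_ne (f := f) (by omega) (ptn r b)
            obtain ⟨c, hc⟩ := hcolx (ptn r b) x hB hx hxne
              (by rw [ptn_ptn]; exact hbne x hx)
            exact ⟨_, c, hc⟩
          · obtain ⟨w, hw⟩ := exists_unplayed (f := f) (by omega)
            obtain ⟨c, hc⟩ := hcolw w hw (by rintro rfl; exact hA hw)
              (by rintro rfl; exact hB hw)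
            exact ⟨w, c, hc⟩
      -- any Breaker move keeps the invariant
      have hstep : ∀ (v : Fin (2 * r)) (o : Option ℕ), f v = none →
          (o = none ∨ ∃ c1 ∈ Finset.range (2 * r - 2), o = some c1) →
          MakerWinsB G (Finset.range (2 * r - 2)) n (update f v (some o)) true := by
        intro v o hv ho
        refine ih _ true (hucp _ _ hv) (hKpres _ _ ho)
          (habp _ _ hv).1 (habp _ _ hv).2 ?_ ?_
        · intro h1' h2'
          have hA : f (ptn r a) = none := hback _ _ _ h1'
          have hB : f (ptn r b) = none := hback _ _ _ h2'
          have h5 : 5 ≤ n + 1 := hp1 hA hB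
          norm_num
          omega
        · rintro (h | h)
          · have h3 : 3 ≤ n + 1 := hp2 (Or.inl (hback _ _ _ h))
            norm_num; omega
          · have h3 : 3 ≤ n + 1 := hp2 (Or.inr (hback _ _ _ h))
            norm_num; omega
      simp only [MakerWinsB]
      refine Or.inr ⟨hexists, ?_, ?_⟩
      · intro v c hvc
        exact hstep v (some c) hvc.2.1 (Or.inr ⟨c, hvc.1, rfl⟩)
      · intro v hv
        exact hstep v none hv (Or.inl rfl)


lemma Kstep {S : Finset ℕ} {f : Fin (2 * r) → Option (Option ℕ)}
    (hK : ∀ u c, f u = some (some c) → c ∈ S) (v : Fin (2 * r)) (o : Option ℕ)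
    (ho : ∀ c, o = some c → c ∈ S) :
    ∀ u c, update f v (some o) u = some (some c) → c ∈ S := by
  intro u c hu
  rcases eq_or_ne u v with rfl | hne
  · rw [Function.update_self] at hu
    exact ho c (by injection hu)
  · rw [Function.update_of_ne hne] at hu
    exact hK u c hu

/-- **Statement 7, main content.** -/
lemma main_win (hr : 3 ≤ r) (hle : G ≤ SimpleGraph.turanGraph (2 * r) r)
    (a b : Fin (2 * r)) (hT : (SimpleGraph.turanGraph (2 * r) r).Adj a b)
    (hG : ¬ G.Adj a b) :
    MakerWinsB G (Finset.range (2 * r - 2)) (Fintype.card (Fin (2 * r)))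
      (fun _ => none) true := by
  obtain ⟨t, ht⟩ : ∃ t, 2 * r = t + 4 := ⟨2 * r - 4, by omega⟩
  have ht2 : 2 ≤ t := by omega
  have hab : a ≠ b := hT.ne
  have hmod : (a : ℕ) % r ≠ (b : ℕ) % r := by
    simpa [SimpleGraph.turanGraph] using hT
  have hGba : ¬ G.Adj b a := fun h => hG h.symm
  have hpab : ptn r a ≠ b := by
    intro h; exact hmod (by rw [← h, ptn_mod])
  have hpba : ptn r b ≠ a := by
    intro h; exact hmod (by rw [← h, ptn_mod])
  have h0K : (0 : ℕ) ∈ Finset.range (2 * r - 2) := Finset.mem_range.2 (by omega)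
  have h1K : (1 : ℕ) ∈ Finset.range (2 * r - 2) := Finset.mem_range.2 (by omega)
  set f0 : Fin (2 * r) → Option (Option ℕ) := fun _ => none with hf0
  have hK0 : ∀ u c, f0 u = some (some c) → c ∈ Finset.range (2 * r - 2) := by
    intro u c h; exact absurd h (by simp [hf0])
  have huc0 : uc f0 = t + 4 := by
    have he : (univ.filter fun v : Fin (2 * r) => f0 v = none) = univ := by
      ext u; simp [hf0]
    rw [uc, he, Finset.card_univ, Fintype.card_fin]
    omega
  have hcard : Fintype.card (Fin (2 * r)) = t + 4 := by simp; omega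
  rw [hcard]
  -- Maker's first move : colour b with 0
  set f1 : Fin (2 * r) → Option (Option ℕ) := update f0 b (some (some 0)) with hf1
  have hK1 : ∀ u c, f1 u = some (some c) → c ∈ Finset.range (2 * r - 2) :=
    Kstep hK0 b _ (fun c h => by cases h; exact h0K)
  have huc1 : uc f1 = t + 3 := by
    rw [hf1, uc_update (by simp [hf0]), huc0]
    omega
  have hf1b : f1 b = some (some 0) := Function.update_self _ _ _
  have hf1ne : ∀ u, u ≠ b → f1 u = none := fun u hu => by
    rw [hf1, Function.update_of_ne hu]
  show MakerWinsB G (Finset.range (2 * r - 2)) (t + 3 + 1) f0 true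
  simp only [MakerWinsB]
  refine Or.inr ⟨b, 0, ⟨h0K, rfl, fun u _ hu => by simp [hf0] at hu⟩, ?_⟩
  show MakerWinsB G (Finset.range (2 * r - 2)) (t + 2 + 1) f1 false
  simp only [MakerWinsB]
  refine Or.inr ⟨⟨a, 0, h0K, hf1ne a hab, ?_⟩, ?_, ?_⟩
  · -- a can be coloured 0 at f1
    intro u hadj hu
    rcases eq_or_ne u b with rfl | hne
    · exact hG hadj
    · rw [hf1ne u hne] at hu; exact absurd hu (by simp)
  · -- Breaker colours some unplayed v with some c
    rintro v c ⟨hcK, hvn, -⟩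
    have hvb : v ≠ b := fun h => by rw [h, hf1b] at hvn; exact absurd hvn (by simp)
    set f2 : Fin (2 * r) → Option (Option ℕ) := update f1 v (some (some c)) with hf2
    have hK2 : ∀ u c', f2 u = some (some c') → c' ∈ Finset.range (2 * r - 2) :=
      Kstep hK1 v _ (fun c' h => by cases h; exact hcK)
    have huc2 : uc f2 = t + 2 := by rw [hf2, uc_update hvn, huc1]; omega
    have hf2b : f2 b = some (some 0) := by
      rw [hf2, Function.update_of_ne (Ne.symm hvb), hf1b]
    have hf2v : f2 v = some (some c) := Function.update_self _ _ _
    have hf2ne : ∀ u, u ≠ b → u ≠ v → f2 u = none := fun u hu1 hu2 => by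
      rw [hf2, Function.update_of_ne hu2, hf1ne u hu1]
    by_cases hvpb : v = ptn r b
    · subst hvpb
      by_cases hc0 : c = 0
      · -- part of b is monochromatic : phase W
        subst hc0
        exact winW hr hle _ f2 true huc2 hK2 ⟨b, by rw [hf2b]; simp, by rw [hf2v]; simp,
          Or.inr (Or.inr ⟨0, hf2b, hf2v⟩)⟩
      · -- Maker answers a := 0, entering phase 2
        show MakerWinsB G (Finset.range (2 * r - 2)) (t + 1 + 1) f2 true
        simp only [MakerWinsB]
        have hf2a : f2 a = none := hf2ne a hab (Ne.symm hpba)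
        refine Or.inr ⟨a, 0, ⟨h0K, hf2a, ?_⟩, ?_⟩
        · intro u hadj hu
          rcases eq_or_ne u b with rfl | hub
          · exact hG hadj
          rcases eq_or_ne u (ptn r b) with rfl | huv
          · rw [hf2v] at hu
            simp only [Option.some.injEq] at hu
            exact hc0 hu
          · rw [hf2ne u hub huv] at hu; exact absurd hu (by simp)
        · set f3 := update f2 a (some (some 0)) with hf3
          have hf3pb : f3 (ptn r b) = some (some c) := by
            rw [hf3, Function.update_of_ne hpba, hf2v]
          refine winP2 hr hle a b hab 0 (t + 1) f3 false ?_
            (Kstep hK2 a _ (fun c' h => by cases h; exact h0K))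
            (Function.update_self _ _ _)
            (by rw [hf3, Function.update_of_ne (Ne.symm hab), hf2b]) ?_ ?_
          · rw [hf3, uc_update hf2a, huc2]; omega
          · intro _ h2
            rw [hf3pb] at h2; exact absurd h2 (by simp)
          · intro _; show (3:ℕ) ≤ t + 1; omega
    · by_cases hva : v = a
      · subst hva
        by_cases hc0 : c = 0
        · -- Breaker coloured a with 0 : phase 2 immediately
          subst hc0
          refine winP2 hr hle v b hab 0 (t + 2) f2 true huc2 hK2 hf2v hf2b ?_ ?_
          · intro _ _; show (4:ℕ) ≤ t + 2; omega
          · intro _; show (2:ℕ) ≤ t + 2; omega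
        · -- Maker answers ptn r v := c, completing a monochromatic part
          show MakerWinsB G (Finset.range (2 * r - 2)) (t + 1 + 1) f2 true
          simp only [MakerWinsB]
          have hf2pa : f2 (ptn r v) = none := hf2ne _ hpab (ptn_ne r v)
          refine Or.inr ⟨ptn r v, c, ⟨hcK, hf2pa, ?_⟩, ?_⟩
          · intro u hadj hu
            rcases eq_or_ne u b with rfl | hub
            · rw [hf2b] at hu
              simp only [Option.some.injEq] at hu
              exact hc0 hu.symm
            rcases eq_or_ne u v with huv' | hua
            · rw [huv'] at hadj
              exact not_adj_ptn r G hle v hadj.symm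
            · rw [hf2ne u hub hua] at hu; exact absurd hu (by simp)
          · set f3 := update f2 (ptn r v) (some (some c)) with hf3
            refine winW hr hle (t + 1) f3 false ?_
              (Kstep hK2 (ptn r v) _ (fun c' h => by cases h; exact hcK))
              ⟨v, ?_, ?_, Or.inr (Or.inr ⟨c, ?_, ?_⟩)⟩
            · rw [hf3, uc_update hf2pa, huc2]; omega
            · rw [hf3, Function.update_of_ne (Ne.symm (ptn_ne r v)), hf2v]; simp
            · rw [hf3, Function.update_self]; simp
            · rw [hf3, Function.update_of_ne (Ne.symm (ptn_ne r v)), hf2v]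
            · rw [hf3, Function.update_self]
      · by_cases hvpa : v = ptn r a
        · -- Breaker played the partner of a : Maker answers a := 0
          subst hvpa
          show MakerWinsB G (Finset.range (2 * r - 2)) (t + 1 + 1) f2 true
          simp only [MakerWinsB]
          have hf2a : f2 a = none := hf2ne a hab (Ne.symm (ptn_ne r a))
          refine Or.inr ⟨a, 0, ⟨h0K, hf2a, ?_⟩, ?_⟩
          · intro u hadj hu
            rcases eq_or_ne u b with rfl | hub
            · exact hG hadj
            rcases eq_or_ne u (ptn r a) with rfl | huv
            · exact not_adj_ptn r G hle a hadj
            · rw [hf2ne u hub huv] at hu; exact absurd hu (by simp)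
          · set f3 := update f2 a (some (some 0)) with hf3
            have hf3pa : f3 (ptn r a) = some (some c) := by
              rw [hf3, Function.update_of_ne (ptn_ne r a), hf2v]
            refine winP2 hr hle a b hab 0 (t + 1) f3 false ?_
              (Kstep hK2 a _ (fun c' h => by cases h; exact h0K))
              (Function.update_self _ _ _)
              (by rw [hf3, Function.update_of_ne (Ne.symm hab),
                hf2, Function.update_of_ne (fun h => hpab h.symm), hf1b]) ?_ ?_
            · rw [hf3, uc_update hf2a, huc2]; omega
            · intro h1
              rw [hf3pa] at h1; exact absurd h1 (by simp)
            · intro _; show (3:ℕ) ≤ t + 1; omega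
        · -- Breaker opened a fresh part
          by_cases hc0 : c = 0
          · -- cross repeat b , v : phase 2 with the pair (b, v)
            subst hc0
            refine winP2 hr hle b v (Ne.symm hvb) 0 (t + 2) f2 true huc2 hK2 hf2b hf2v ?_ ?_
            · intro _ _; show (4:ℕ) ≤ t + 2; omega
            · intro _; show (2:ℕ) ≤ t + 2; omega
          · -- Maker answers ptn r v := c, completing a monochromatic part
            show MakerWinsB G (Finset.range (2 * r - 2)) (t + 1 + 1) f2 true
            simp only [MakerWinsB]
            have hpvb : ptn r v ≠ b := fun h => hvpb (by rw [← h, ptn_ptn])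
            have hf2pv : f2 (ptn r v) = none := hf2ne _ hpvb (ptn_ne r v)
            refine Or.inr ⟨ptn r v, c, ⟨hcK, hf2pv, ?_⟩, ?_⟩
            · intro u hadj hu
              rcases eq_or_ne u b with rfl | hub
              · rw [hf2b] at hu
                simp only [Option.some.injEq] at hu
                exact hc0 hu.symm
              rcases eq_or_ne u v with huv' | huv
              · rw [huv'] at hadj
                exact not_adj_ptn r G hle v hadj.symm
              · rw [hf2ne u hub huv] at hu; exact absurd hu (by simp)
            · set f3 := update f2 (ptn r v) (some (some c)) with hf3
              refine winW hr hle (t + 1) f3 false ?_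
                (Kstep hK2 (ptn r v) _ (fun c' h => by cases h; exact hcK))
                ⟨v, ?_, ?_, Or.inr (Or.inr ⟨c, ?_, ?_⟩)⟩
              · rw [hf3, uc_update hf2pv, huc2]; omega
              · rw [hf3, Function.update_of_ne (Ne.symm (ptn_ne r v)), hf2v]; simp
              · rw [hf3, Function.update_self]; simp
              · rw [hf3, Function.update_of_ne (Ne.symm (ptn_ne r v)), hf2v]
              · rw [hf3, Function.update_self]
  · -- Breaker blanks some unplayed v
    intro v hvn
    have hvb : v ≠ b := fun h => by rw [h, hf1b] at hvn; exact absurd hvn (by simp)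
    set f2 : Fin (2 * r) → Option (Option ℕ) := update f1 v (some none) with hf2
    have hK2 : ∀ u c', f2 u = some (some c') → c' ∈ Finset.range (2 * r - 2) :=
      Kstep hK1 v _ (fun c' h => by exact absurd h (by simp))
    have huc2 : uc f2 = t + 2 := by rw [hf2, uc_update hvn, huc1]; omega
    have hf2b : f2 b = some (some 0) := by
      rw [hf2, Function.update_of_ne (Ne.symm hvb), hf1b]
    have hf2v : f2 v = some none := Function.update_self _ _ _
    have hf2ne : ∀ u, u ≠ b → u ≠ v → f2 u = none := fun u hu1 hu2 => by
      rw [hf2, Function.update_of_ne hu2, hf1ne u hu1]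
    by_cases hvpb : v = ptn r b
    · -- part of b is fully played and contains a blank : phase W
      subst hvpb
      exact winW hr hle _ f2 true huc2 hK2 ⟨b, by rw [hf2b]; simp, by rw [hf2v]; simp,
        Or.inr (Or.inl hf2v)⟩
    · by_cases hva : v = a
      · -- Breaker blanked a : Maker answers ptn r a := 1
        subst hva
        show MakerWinsB G (Finset.range (2 * r - 2)) (t + 1 + 1) f2 true
        simp only [MakerWinsB]
        have hf2pa : f2 (ptn r v) = none := hf2ne _ hpab (ptn_ne r v)
        refine Or.inr ⟨ptn r v, 1, ⟨h1K, hf2pa, ?_⟩, ?_⟩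
        · intro u hadj hu
          rcases eq_or_ne u b with rfl | hub
          · rw [hf2b] at hu; exact absurd hu (by simp)
          rcases eq_or_ne u v with rfl | hua
          · rw [hf2v] at hu; exact absurd hu (by simp)
          · rw [hf2ne u hub hua] at hu; exact absurd hu (by simp)
        · set f3 := update f2 (ptn r v) (some (some 1)) with hf3
          refine winW hr hle (t + 1) f3 false ?_
            (Kstep hK2 (ptn r v) _ (fun c' h => by cases h; exact h1K))
            ⟨v, ?_, ?_, Or.inl ?_⟩
          · rw [hf3, uc_update hf2pa, huc2]; omega
          · rw [hf3, Function.update_of_ne (Ne.symm (ptn_ne r v)), hf2v]; simp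
          · rw [hf3, Function.update_self]; simp
          · rw [hf3, Function.update_of_ne (Ne.symm (ptn_ne r v)), hf2v]
      · by_cases hvpa : v = ptn r a
        · -- Breaker blanked the partner of a : Maker answers a := 0
          subst hvpa
          show MakerWinsB G (Finset.range (2 * r - 2)) (t + 1 + 1) f2 true
          simp only [MakerWinsB]
          have hf2a : f2 a = none := hf2ne a hab (Ne.symm (ptn_ne r a))
          refine Or.inr ⟨a, 0, ⟨h0K, hf2a, ?_⟩, ?_⟩
          · intro u hadj hu
            rcases eq_or_ne u b with rfl | hub
            · exact hG hadj
            rcases eq_or_ne u (ptn r a) with rfl | huv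
            · rw [hf2v] at hu; exact absurd hu (by simp)
            · rw [hf2ne u hub huv] at hu; exact absurd hu (by simp)
          · set f3 := update f2 a (some (some 0)) with hf3
            have hf3pa : f3 (ptn r a) = some none := by
              rw [hf3, Function.update_of_ne (ptn_ne r a), hf2v]
            refine winP2 hr hle a b hab 0 (t + 1) f3 false ?_
              (Kstep hK2 a _ (fun c' h => by cases h; exact h0K))
              (Function.update_self _ _ _)
              (by rw [hf3, Function.update_of_ne (Ne.symm hab),
                hf2, Function.update_of_ne (fun h => hpab h.symm), hf1b]) ?_ ?_
            · rw [hf3, uc_update hf2a, huc2]; omega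
            · intro h1
              rw [hf3pa] at h1; exact absurd h1 (by simp)
            · intro _; show (3:ℕ) ≤ t + 1; omega
        · -- Breaker blanked a fresh part : Maker completes it with any colour
          show MakerWinsB G (Finset.range (2 * r - 2)) (t + 1 + 1) f2 true
          simp only [MakerWinsB]
          have hpvb : ptn r v ≠ b := fun h => hvpb (by rw [← h, ptn_ptn])
          have hf2pv : f2 (ptn r v) = none := hf2ne _ hpvb (ptn_ne r v)
          refine Or.inr ⟨ptn r v, 1, ⟨h1K, hf2pv, ?_⟩, ?_⟩
          · intro u hadj hu
            rcases eq_or_ne u b with rfl | hub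
            · rw [hf2b] at hu; exact absurd hu (by simp)
            rcases eq_or_ne u v with rfl | huv
            · rw [hf2v] at hu; exact absurd hu (by simp)
            · rw [hf2ne u hub huv] at hu; exact absurd hu (by simp)
          · set f3 := update f2 (ptn r v) (some (some 1)) with hf3
            refine winW hr hle (t + 1) f3 false ?_
              (Kstep hK2 (ptn r v) _ (fun c' h => by cases h; exact h1K))
              ⟨v, ?_, ?_, Or.inl ?_⟩
            · rw [hf3, uc_update hf2pv, huc2]; omega
            · rw [hf3, Function.update_of_ne (Ne.symm (ptn_ne r v)), hf2v]; simp
            · rw [hf3, Function.update_self]; simp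
            · rw [hf3, Function.update_of_ne (Ne.symm (ptn_ne r v)), hf2v]



end Main
end Auxiliary

/-- For `r ≥ 3`, any proper spanning subgraph `G` of the Turán graph
`T(2r,r)` satisfies `χ_gb(G) ≤ 2r − 2`. -/
theorem chiGb_le_of_proper_subgraph_turan (r : ℕ) (hr : 3 ≤ r)
    (G : SimpleGraph (Fin (2 * r)))
    (hle : G ≤ SimpleGraph.turanGraph (2 * r) r)
    (hne : G ≠ SimpleGraph.turanGraph (2 * r) r) :
    chiGb G ≤ 2 * r - 2 := by
  obtain ⟨a, b, hT, hG⟩ :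
      ∃ a b, (SimpleGraph.turanGraph (2 * r) r).Adj a b ∧ ¬ G.Adj a b := by
    by_contra h
    push_neg at h
    exact hne (le_antisymm hle (fun a b hab => h a b hab))
  exact Nat.sInf_le (main_win hr hle a b hT hG)

end GameCol
end

section
/- If a finite simple graph G has at most ⌈k/2⌉ vertices of degree at least k, then χ_gb(G) ≤ k. -/
open Function

namespace GameCol

variable {V : Type*} [Fintype V] [DecidableEq V]

section Statement10Aux

variable (G : SimpleGraph V) [DecidableRel G.Adj] (k : ℕ)

/-- The set of played vertices. -/
private def playedF (f : V → Option (Option ℕ)) : Finset V :=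
  Finset.univ.filter (fun v => f v ≠ none)

/-- The set of high-degree vertices. -/
private def bigF : Finset V := Finset.univ.filter (fun v => k ≤ G.degree v)

/-- The set of unplayed high-degree vertices. -/
private def uF (f : V → Option (Option ℕ)) : Finset V :=
  (bigF G k).filter (fun v => f v = none)

private lemma mem_playedF {f : V → Option (Option ℕ)} {v : V} :
    v ∈ playedF f ↔ f v ≠ none := by simp [playedF]

private lemma playedF_update_card (f : V → Option (Option ℕ)) (v : V) (x : Option ℕ)
    (hv : f v = none) :
    (playedF (update f v (some x))).card = (playedF f).card + 1 := by
  have : playedF (update f v (some x)) = insert v (playedF f) := by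
    ext u
    rcases eq_or_ne u v with rfl | hne
    · simp [mem_playedF, Function.update_self]
    · simp [mem_playedF, Function.update_of_ne hne, hne]
  rw [this, Finset.card_insert_of_notMem (by simp [mem_playedF, hv])]

private lemma uF_update (f : V → Option (Option ℕ)) (v : V) (x : Option ℕ) :
    uF G k (update f v (some x)) = (uF G k f).erase v := by
  ext u
  rcases eq_or_ne u v with rfl | hne
  · simp [uF, Function.update_self]
  · simp [uF, Function.update_of_ne hne, hne, Finset.mem_erase]

private lemma exists_legal_colour (f : V → Option (Option ℕ)) (v : V)
    (hv : f v = none)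
    (hcard : ((G.neighborFinset v).filter (fun u => f u ≠ none)).card < k) :
    ∃ c, BColLegal G (Finset.range k) f v c := by
  classical
  obtain ⟨c, hck, hcC⟩ : ∃ c ∈ Finset.range k, c ∉ (Finset.range k).filter
      (fun c => ∃ u ∈ G.neighborFinset v, f u = some (some c)) := by
    apply Finset.exists_of_ssubset
    apply (Finset.filter_subset _ _).ssubset_of_ne
    intro heq
    have hsub : (Finset.range k).filter
        (fun c => ∃ u ∈ G.neighborFinset v, f u = some (some c)) ⊆
        ((G.neighborFinset v).filter (fun u => f u ≠ none)).image
          (fun u => ((f u).getD none).getD 0) := by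
      intro c hc
      obtain ⟨-, u, hu, hfu⟩ := Finset.mem_filter.1 hc
      exact Finset.mem_image.2 ⟨u, Finset.mem_filter.2 ⟨hu, by simp [hfu]⟩, by simp [hfu]⟩
    have h1 := Finset.card_le_card hsub
    rw [heq, Finset.card_range] at h1
    have h2 := Finset.card_image_le (s := (G.neighborFinset v).filter (fun u => f u ≠ none))
      (f := fun u => ((f u).getD none).getD 0)
    omega
  refine ⟨c, hck, hv, fun u hadj hequ => hcC ?_⟩
  exact Finset.mem_filter.2 ⟨hck, u, (by simpa using hadj : u ∈ G.neighborFinset v), hequ⟩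

private lemma coloured_nbrs_le_played (f : V → Option (Option ℕ)) (v : V) :
    ((G.neighborFinset v).filter (fun u => f u ≠ none)).card ≤ (playedF f).card := by
  refine Finset.card_le_card fun u hu => ?_
  exact mem_playedF.2 (Finset.mem_filter.1 hu).2

private lemma main_lemma (h : (bigF G k).card ≤ (k + 1) / 2) :
    ∀ fuel (f : V → Option (Option ℕ)) (b : Bool),
      Fintype.card V ≤ fuel + (playedF f).card →
      ((uF G k f).Nonempty →
        (playedF f).card + 2 * (uF G k f).card + (cond b 0 1) ≤ 2 * (bigF G k).card) →
      MakerWinsB G (Finset.range k) fuel f b := by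
  have h2H : 2 * (bigF G k).card ≤ k + 1 := by
    have := Nat.div_mul_le_self (k + 1) 2
    omega
  intro fuel
  induction fuel with
  | zero =>
    intro f b hfuel _
    have hcard : (playedF f).card = Fintype.card V :=
      le_antisymm (Finset.card_le_univ _) (by simpa using hfuel)
    have := Finset.eq_univ_of_card _ hcard
    intro v
    have : v ∈ playedF f := this ▸ Finset.mem_univ v
    exact mem_playedF.1 this
  | succ n ih =>
    intro f b hfuel hinv
    -- key: existence of a legal colour at an unplayed vertex
    have getleg : ∀ v : V, f v = none → (uF G k f).Nonempty →
        v ∈ bigF G k → ∃ c, BColLegal G (Finset.range k) f v c := by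
      intro v hv hU hvb
      refine exists_legal_colour G k f v hv ?_
      have h1 := coloured_nbrs_le_played G f v
      have h2 := hinv hU
      have h3 : 1 ≤ (uF G k f).card := Finset.card_pos.2 hU
      cases b <;> simp only [cond] at h2 <;> omega
    have getlow : ∀ v : V, f v = none → v ∉ bigF G k →
        ∃ c, BColLegal G (Finset.range k) f v c := by
      intro v hv hvb
      refine exists_legal_colour G k f v hv ?_
      have hdeg : G.degree v < k := by
        by_contra hle
        exact hvb (Finset.mem_filter.2 ⟨Finset.mem_univ v, not_lt.1 hle⟩)
      calc ((G.neighborFinset v).filter (fun u => f u ≠ none)).card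
          ≤ (G.neighborFinset v).card := Finset.card_filter_le _ _
        _ = G.degree v := G.card_neighborFinset_eq_degree v
        _ < k := hdeg
    -- any unplayed vertex admits some legal colour move somewhere
    have exmove : (¬ AllPlayed f) → ∃ v c, BColLegal G (Finset.range k) f v c := by
      intro hnall
      obtain ⟨w, hw⟩ : ∃ w, f w = none := by
        by_contra hc
        push_neg at hc
        exact hnall fun v => hc v
      rcases (uF G k f).eq_empty_or_nonempty with hUe | hUne
      · have hwb : w ∉ bigF G k := by
          intro hb
          have hmem : w ∈ uF G k f := Finset.mem_filter.2 ⟨hb, hw⟩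
          rw [hUe] at hmem
          exact absurd hmem (Finset.notMem_empty w)
        exact ⟨w, getlow w hw hwb⟩
      · obtain ⟨v, hv⟩ := id hUne
        have hvb := (Finset.mem_filter.1 hv).1
        have hvn := (Finset.mem_filter.1 hv).2
        exact ⟨v, getleg v hvn hUne hvb⟩
    -- facts for invariant maintenance after a move at an unplayed vertex
    have fuel' : ∀ v x, f v = none →
        Fintype.card V ≤ n + (playedF (update f v (some x))).card := by
      intro v x hv
      rw [playedF_update_card f v x hv]; omega
    cases b with
    | true =>
      rw [MakerWinsB]
      by_cases hall : AllPlayed f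
      · exact Or.inl hall
      right
      obtain ⟨w, hw⟩ : ∃ w, f w = none := by
        by_contra hc
        push_neg at hc
        exact hall fun v => hc v
      rcases (uF G k f).eq_empty_or_nonempty with hUe | hUne
      · -- colour any unplayed (low-degree) vertex
        have hwb : w ∉ bigF G k := by
          intro hb
          have hmem : w ∈ uF G k f := Finset.mem_filter.2 ⟨hb, hw⟩
          rw [hUe] at hmem
          exact absurd hmem (Finset.notMem_empty w)
        obtain ⟨c, hc⟩ := getlow w hw hwb
        refine ⟨w, c, hc, ih _ false (fuel' w (some c) hw) ?_⟩
        intro hU'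
        exfalso
        rw [uF_update, hUe] at hU'
        simp at hU'
      · -- colour an unplayed high-degree vertex
        obtain ⟨v, hv⟩ := id hUne
        have hvb := (Finset.mem_filter.1 hv).1
        have hvn := (Finset.mem_filter.1 hv).2
        obtain ⟨c, hc⟩ := getleg v hvn hUne hvb
        refine ⟨v, c, hc, ih _ false (fuel' v (some c) hvn) ?_⟩
        intro _
        rw [uF_update, playedF_update_card f v (some c) hvn, Finset.card_erase_of_mem hv]
        have h2 := hinv hUne
        have h3 : 1 ≤ (uF G k f).card := Finset.card_pos.2 hUne
        simp only [cond] at h2 ⊢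
        omega
    | false =>
      rw [MakerWinsB]
      by_cases hall : AllPlayed f
      · exact Or.inl ⟨fun ⟨v, c, hc⟩ => hall v hc.2.1, hall⟩
      right
      have inv' : ∀ v x, f v = none →
          ((uF G k (update f v (some x))).Nonempty →
            (playedF (update f v (some x))).card
              + 2 * (uF G k (update f v (some x))).card + (cond true 0 1)
              ≤ 2 * (bigF G k).card) := by
        intro v x hv hU'
        rw [uF_update] at hU' ⊢
        have hUne : (uF G k f).Nonempty := by
          obtain ⟨u, hu⟩ := hU'
          exact ⟨u, Finset.mem_of_mem_erase hu⟩
        have h2 := hinv hUne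
        have h4 : ((uF G k f).erase v).card ≤ (uF G k f).card := Finset.card_erase_le
        rw [playedF_update_card f v x hv]
        simp only [cond] at h2 ⊢
        omega
      refine ⟨exmove hall, ?_, ?_⟩
      · intro v c hc
        exact ih _ true (fuel' v (some c) hc.2.1) (inv' v (some c) hc.2.1)
      · intro v hv
        exact ih _ true (fuel' v none hv) (inv' v none hv)

end Statement10Aux

/-- If a finite simple graph `G` has at most `⌈k/2⌉` vertices of
degree at least `k`, then `χ_gb(G) ≤ k`. -/
theorem chiGb_le_of_few_large_degree {V : Type*} [Fintype V] [DecidableEq V]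
    (G : SimpleGraph V) [DecidableRel G.Adj] (k : ℕ)
    (h : (Finset.univ.filter (fun v => k ≤ G.degree v)).card ≤ (k + 1) / 2) :
    chiGb G ≤ k := by
  apply Nat.sInf_le
  show MakerWinsB G (Finset.range k) (Fintype.card V) (fun _ => none) true
  have hplayed : playedF (fun _ : V => (none : Option (Option ℕ))) = ∅ := by
    simp [playedF]
  refine main_lemma G k h (Fintype.card V) _ true (by rw [hplayed]; simp) ?_
  intro _
  have : uF G k (fun _ : V => (none : Option (Option ℕ))) = bigF G k := by
    simp [uF]
  rw [this, hplayed]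
  simp

end GameCol
end

section
/- Let r ≥ 1, let G be a spanning subgraph of the Turán graph T(2r,r) on 2r vertices, and let D_1,…,D_s be some s ≥ 0 of the r vertex classes of size 2 corresponding to the colour classes in the unique (up to relabelling) r-colouring of T(2r,r). Then χ_gb(G; D_1,…,D_s) ≤ 2r − s − 1. -/
open Function

namespace GameCol

variable {V : Type*} [Fintype V] [DecidableEq V]

/-- partner vertex in the Turán graph T(2r,r) -/
def pa (r : ℕ) (v : Fin (2*r)) : Fin (2*r) :=
  ⟨((v:ℕ) + r) % (2*r), Nat.mod_lt _ (by have := v.isLt; omega)⟩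

lemma pa_coe (r : ℕ) (v : Fin (2*r)) :
    (pa r v : ℕ) = if (v:ℕ) + r < 2*r then (v:ℕ) + r else (v:ℕ) - r := by
  have hv := v.isLt
  show ((v:ℕ) + r) % (2*r) = _
  split
  · exact Nat.mod_eq_of_lt (by omega)
  · rw [Nat.mod_eq_sub_mod (by omega), Nat.mod_eq_of_lt (by omega)]
    omega

lemma pa_ne (r : ℕ) (v : Fin (2*r)) : pa r v ≠ v := by
  have hv := v.isLt
  intro h
  have := congrArg (fun x : Fin (2*r) => (x:ℕ)) h
  simp only [pa_coe] at this
  split at this <;> omega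

lemma pa_pa (r : ℕ) (v : Fin (2*r)) : pa r (pa r v) = v := by
  have hv := v.isLt
  apply Fin.ext
  rw [pa_coe, pa_coe]
  split <;> split <;> omega

lemma res_pa (r : ℕ) (v : Fin (2*r)) : ((pa r v : Fin (2*r)) : ℕ) % r = (v:ℕ) % r := by
  have hv := v.isLt
  rw [pa_coe]
  split
  · exact Nat.add_mod_right _ _
  · have h : (v:ℕ) - r + r = (v:ℕ) := by omega
    conv_rhs => rw [← h]
    exact (Nat.add_mod_right _ _).symm

lemma res_eq_iff (r : ℕ) (u v : Fin (2*r)) :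
    (u:ℕ) % r = (v:ℕ) % r ↔ u = v ∨ u = pa r v := by
  constructor
  · intro h
    have hu := u.isLt; have hv := v.isLt
    have hr : 0 < r := by omega
    have h1 : r * ((u:ℕ)/r) + (u:ℕ)%r = (u:ℕ) := Nat.div_add_mod _ _
    have h2 : r * ((v:ℕ)/r) + (v:ℕ)%r = (v:ℕ) := Nat.div_add_mod _ _
    have hqu : (u:ℕ)/r < 2 := Nat.div_lt_of_lt_mul (by omega)
    have hqv : (v:ℕ)/r < 2 := Nat.div_lt_of_lt_mul (by omega)
    have pc := pa_coe r v
    interval_cases hu' : ((u:ℕ)/r) <;> interval_cases hv' : ((v:ℕ)/r) <;>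
      [skip; skip; skip; skip] <;>
      first
        | (left; apply Fin.ext; omega)
        | (right; apply Fin.ext; rw [pc]; split <;> omega)
  · rintro (rfl | rfl)
    · rfl
    · exact res_pa r v



/-- The class (pair) of a vertex. -/
def clsF (r : ℕ) (v : Fin (2*r)) : Finset (Fin (2*r)) := {v, pa r v}

lemma mem_clsF (r : ℕ) (u v : Fin (2*r)) :
    u ∈ clsF r v ↔ (u:ℕ) % r = (v:ℕ) % r := by
  simp [clsF, res_eq_iff]

lemma self_mem_clsF (r : ℕ) (v : Fin (2*r)) : v ∈ clsF r v := by simp [clsF]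

lemma pa_mem_clsF (r : ℕ) (v : Fin (2*r)) : pa r v ∈ clsF r v := by simp [clsF]

lemma clsF_card (r : ℕ) (v : Fin (2*r)) : (clsF r v).card = 2 := by
  rw [clsF, Finset.card_insert_of_notMem (by simp only [Finset.mem_singleton]; exact fun h => (pa_ne r v) h.symm)]
  simp

lemma clsF_eq_of_mem (r : ℕ) {u v : Fin (2*r)} (h : u ∈ clsF r v) : clsF r v = clsF r u := by
  ext w
  rw [mem_clsF, mem_clsF, (mem_clsF r u v).1 h]

lemma clsF_pa (r : ℕ) (v : Fin (2*r)) : clsF r (pa r v) = clsF r v :=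
  (clsF_eq_of_mem r (pa_mem_clsF r v)).symm

lemma mem_clsF_iff_pair (r : ℕ) (u v : Fin (2*r)) :
    u ∈ clsF r v ↔ u = v ∨ u = pa r v := by simp [clsF]

/-- The collection of marked classes. -/
def DS (r s : ℕ) (ι : Fin s → Fin r) : Finset (Finset (Fin (2*r))) :=
  Finset.image
    (fun j => Finset.univ.filter (fun v : Fin (2*r) => (v : ℕ) % r = (ι j : ℕ)))
    Finset.univ

lemma filter_res_eq_clsF (r : ℕ) (v : Fin (2*r)) :
    Finset.univ.filter (fun u : Fin (2*r) => (u : ℕ) % r = (v:ℕ) % r) = clsF r v := by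
  ext u; simp [mem_clsF]

lemma DS_class (r s : ℕ) (ι : Fin s → Fin r) {D : Finset (Fin (2*r))}
    (hD : D ∈ DS r s ι) {v : Fin (2*r)} (hv : v ∈ D) : D = clsF r v := by
  obtain ⟨j, -, rfl⟩ := Finset.mem_image.1 hD
  have hv' : (v:ℕ) % r = (ι j : ℕ) := by simpa using hv
  rw [← filter_res_eq_clsF]
  ext u; simp [hv']

lemma DS_nonempty (r s : ℕ) (ι : Fin s → Fin r) (hr : 1 ≤ r) {D : Finset (Fin (2*r))}
    (hD : D ∈ DS r s ι) : ∃ v, v ∈ D := by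
  obtain ⟨j, -, rfl⟩ := Finset.mem_image.1 hD
  have hlt : ((ι j : ℕ)) < 2*r := by have := (ι j).isLt; omega
  exact ⟨⟨ι j, hlt⟩, by simp [Nat.mod_eq_of_lt (ι j).isLt]⟩

lemma DS_card (r s : ℕ) (ι : Fin s → Fin r) (hr : 1 ≤ r) (hι : Function.Injective ι) :
    (DS r s ι).card = s := by
  rw [DS, Finset.card_image_of_injective _ ?_, Finset.card_univ, Fintype.card_fin]
  intro j j' h
  have hlt : ((ι j : ℕ)) < 2*r := by have := (ι j).isLt; omega
  have hmem : (⟨(ι j : ℕ), hlt⟩ : Fin (2*r)) ∈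
      Finset.univ.filter (fun v : Fin (2*r) => (v : ℕ) % r = (ι j : ℕ)) := by
    simp [Nat.mod_eq_of_lt (ι j).isLt]
  simp only [] at h
  rw [h] at hmem
  have : (ι j : ℕ) % r = (ι j' : ℕ) := by simpa using hmem
  rw [Nat.mod_eq_of_lt (ι j).isLt] at this
  exact hι (Fin.ext this)



variable {V : Type*} [Fintype V] [DecidableEq V]

variable {r : ℕ}

/-- played vertices -/
def PlF (r : ℕ) (f : Fin (2*r) → Option (Option ℕ)) : Finset (Fin (2*r)) :=
  Finset.univ.filter (fun v => f v ≠ none)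

/-- blank vertices -/
def BlF (r : ℕ) (f : Fin (2*r) → Option (Option ℕ)) : Finset (Fin (2*r)) :=
  Finset.univ.filter (fun v => f v = some none)

/-- coloured vertices -/
def CoF (r : ℕ) (f : Fin (2*r) → Option (Option ℕ)) : Finset (Fin (2*r)) :=
  Finset.univ.filter (fun v => f v ≠ none ∧ f v ≠ some none)

/-- unplayed vertices -/
def UnF (r : ℕ) (f : Fin (2*r) → Option (Option ℕ)) : Finset (Fin (2*r)) :=
  Finset.univ.filter (fun v => f v = none)

/-- number of fully played marked classes -/
def mful (r : ℕ) (f : Fin (2*r) → Option (Option ℕ)) (ds : Finset (Finset (Fin (2*r)))) : ℕ :=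
  (ds.filter (fun D => ∀ v ∈ D, f v ≠ none)).card

lemma mem_PlF {f : Fin (2*r) → Option (Option ℕ)} {v} : v ∈ PlF r f ↔ f v ≠ none := by
  simp [PlF]
lemma mem_BlF {f : Fin (2*r) → Option (Option ℕ)} {v} : v ∈ BlF r f ↔ f v = some none := by
  simp [BlF]
lemma mem_CoF {f : Fin (2*r) → Option (Option ℕ)} {v} : v ∈ CoF r f ↔ ∃ c, f v = some (some c) := by
  simp only [CoF, Finset.mem_filter, Finset.mem_univ, true_and]
  cases h : f v with
  | none => simp
  | some w => cases w <;> simp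
lemma mem_UnF {f : Fin (2*r) → Option (Option ℕ)} {v} : v ∈ UnF r f ↔ f v = none := by
  simp [UnF]

lemma PlF_card_add_UnF_card (f : Fin (2*r) → Option (Option ℕ)) :
    (PlF r f).card + (UnF r f).card = 2*r := by
  have h : UnF r f = Finset.univ \ PlF r f := by
    ext v; simp [mem_UnF, mem_PlF]
  have hle : (PlF r f).card ≤ 2*r := by
    simpa using Finset.card_le_univ (PlF r f)
  rw [h, Finset.card_sdiff_of_subset (Finset.subset_univ _)]
  simp only [Finset.card_univ, Fintype.card_fin]
  omega

lemma CoF_card_add_BlF_card (f : Fin (2*r) → Option (Option ℕ)) :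
    (CoF r f).card + (BlF r f).card = (PlF r f).card := by
  classical
  rw [← Finset.card_union_of_disjoint]
  · congr 1
    ext v
    simp only [Finset.mem_union, mem_CoF, mem_BlF, mem_PlF]
    cases h : f v with
    | none => simp
    | some w => cases w <;> simp
  · rw [Finset.disjoint_left]
    intro a ha hb
    rw [mem_CoF] at ha; rw [mem_BlF] at hb
    obtain ⟨c, hc⟩ := ha
    rw [hb] at hc
    simp at hc

lemma BlF_update_blank {f : Fin (2*r) → Option (Option ℕ)} {y : Fin (2*r)} (hy : f y = none) :
    BlF r (update f y (some none)) = insert y (BlF r f) := by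
  ext v
  by_cases h : v = y <;> simp [mem_BlF, h, update_of_ne, hy]

lemma BlF_update_col {f : Fin (2*r) → Option (Option ℕ)} {y : Fin (2*r)} (c : ℕ) (hy : f y = none) :
    BlF r (update f y (some (some c))) = BlF r f := by
  ext v
  by_cases h : v = y <;> simp [mem_BlF, h, update_of_ne, hy]

lemma CoF_update_blank {f : Fin (2*r) → Option (Option ℕ)} {y : Fin (2*r)} (hy : f y = none) :
    CoF r (update f y (some none)) = CoF r f := by
  ext v
  by_cases h : v = y <;> simp [mem_CoF, h, update_of_ne, hy]

lemma CoF_update_col {f : Fin (2*r) → Option (Option ℕ)} {y : Fin (2*r)} (c : ℕ) (hy : f y = none) :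
    CoF r (update f y (some (some c))) = insert y (CoF r f) := by
  ext v
  by_cases h : v = y <;> simp [mem_CoF, h, update_of_ne, hy]

lemma UnF_update {f : Fin (2*r) → Option (Option ℕ)} {y : Fin (2*r)} (w : Option ℕ) :
    UnF r (update f y (some w)) = (UnF r f).erase y := by
  ext v
  by_cases h : v = y <;> simp [mem_UnF, Finset.mem_erase, h, update_of_ne]

lemma UnF_update_card {f : Fin (2*r) → Option (Option ℕ)} {y : Fin (2*r)} (hy : f y = none)
    (w : Option ℕ) : (UnF r (update f y (some w))).card + 1 = (UnF r f).card := by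
  rw [UnF_update, Finset.card_erase_of_mem (mem_UnF.2 hy)]
  have : 0 < (UnF r f).card := Finset.card_pos.2 ⟨y, mem_UnF.2 hy⟩
  omega

lemma BlF_card_update_blank {f : Fin (2*r) → Option (Option ℕ)} {y : Fin (2*r)} (hy : f y = none) :
    (BlF r (update f y (some none))).card = (BlF r f).card + 1 := by
  rw [BlF_update_blank hy, Finset.card_insert_of_notMem]
  rw [mem_BlF, hy]
  simp

/-- classes that become full under an update within the class of `v` -/
lemma mful_le_aux {f g : Fin (2*r) → Option (Option ℕ)} {ds : Finset (Finset (Fin (2*r)))}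
    (hds : ∀ D ∈ ds, ∀ x ∈ D, D = clsF r x) {v : Fin (2*r)}
    (h : ∀ x, g x ≠ none → f x = none → x ∈ clsF r v) :
    mful r g ds ≤ mful r f ds + 1 := by
  have hsub : ds.filter (fun D => ∀ x ∈ D, g x ≠ none) ⊆
      insert (clsF r v) (ds.filter (fun D => ∀ x ∈ D, f x ≠ none)) := by
    intro D hD
    rw [Finset.mem_filter] at hD
    obtain ⟨hD1, hD2⟩ := hD
    by_cases hf : ∀ x ∈ D, f x ≠ none
    · exact Finset.mem_insert_of_mem (Finset.mem_filter.2 ⟨hD1, hf⟩)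
    · push_neg at hf
      obtain ⟨x, hx, hfx⟩ := hf
      have hxv : x ∈ clsF r v := h x (hD2 x hx) hfx
      refine Finset.mem_insert.2 (Or.inl ?_)
      rw [hds D hD1 x hx, ← clsF_eq_of_mem r hxv]
  calc mful r g ds ≤ (insert (clsF r v) (ds.filter (fun D => ∀ x ∈ D, f x ≠ none))).card :=
        Finset.card_le_card hsub
    _ ≤ mful r f ds + 1 := Finset.card_insert_le _ _



lemma mful_le_aux' {f g : Fin (2*r) → Option (Option ℕ)} {ds : Finset (Finset (Fin (2*r)))}
    (hds : ∀ D ∈ ds, ∀ x ∈ D, D = clsF r x) {v : Fin (2*r)}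
    (h : ∀ x, g x ≠ none → f x = none → x ∈ clsF r v)
    (hnm : ¬ InMarked ds v) :
    mful r g ds ≤ mful r f ds := by
  apply Finset.card_le_card
  intro D hD
  rw [Finset.mem_filter] at hD ⊢
  obtain ⟨hD1, hD2⟩ := hD
  refine ⟨hD1, fun x hx => ?_⟩
  by_contra hfx
  have hxv : x ∈ clsF r v := h x (hD2 x hx) hfx
  have : D = clsF r v := by rw [hds D hD1 x hx, ← clsF_eq_of_mem r hxv]
  exact hnm ⟨D, hD1, this ▸ self_mem_clsF r v⟩

lemma mful_erase_le {f : Fin (2*r) → Option (Option ℕ)} {ds : Finset (Finset (Fin (2*r)))}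
    (d : Finset (Fin (2*r))) : mful r f (ds.erase d) ≤ mful r f ds :=
  Finset.card_le_card (Finset.filter_subset_filter _ (Finset.erase_subset _ _))

lemma InMarked_iff {ds : Finset (Finset (Fin (2*r)))}
    (hds : ∀ D ∈ ds, ∀ x ∈ D, D = clsF r x) {v : Fin (2*r)} :
    InMarked ds v ↔ clsF r v ∈ ds := by
  constructor
  · rintro ⟨D, hD, hv⟩
    rwa [← hds D hD v hv]
  · intro h
    exact ⟨_, h, self_mem_clsF r v⟩

lemma InMarked_pa {ds : Finset (Finset (Fin (2*r)))}
    (hds : ∀ D ∈ ds, ∀ x ∈ D, D = clsF r x) {v : Fin (2*r)} :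
    InMarked ds (pa r v) ↔ InMarked ds v := by
  rw [InMarked_iff hds, InMarked_iff hds, clsF_pa]

instance instDecInMarked {W : Type*} [DecidableEq W] (ds : Finset (Finset W)) (v : W) :
    Decidable (InMarked ds v) := by
  unfold InMarked; infer_instance

lemma hds_of_subset {s : ℕ} {ι : Fin s → Fin r} {ds : Finset (Finset (Fin (2*r)))}
    (h : ds ⊆ DS r s ι) : ∀ D ∈ ds, ∀ x ∈ D, D = clsF r x :=
  fun D hD x hx => DS_class r s ι (h hD) hx

/-- Key unplayed-count lemma: each untouched marked class carries 2 unplayed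
vertices (1 if it is the half-open class of `hv`). -/
lemma UL {f : Fin (2*r) → Option (Option ℕ)} {ds : Finset (Finset (Fin (2*r)))}
    (hds : ∀ D ∈ ds, ∀ x ∈ D, D = clsF r x) {hv : Fin (2*r)}
    (hpairs : ∀ w, w ≠ hv → w ≠ pa r hv → f w ≠ none → f (pa r w) ≠ none)
    (hpar : f (pa r hv) = none)
    (A : Finset (Fin (2*r))) (hA : ∀ x ∈ A, f x = none ∧ ¬ InMarked ds x) :
    A.card + 2 * (ds.filter (fun D => ¬ ∀ v ∈ D, f v ≠ none)).card ≤
      (UnF r f).card + (if InMarked ds hv then 1 else 0) := by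
  classical
  set T := ds.filter (fun D => ¬ ∀ v ∈ D, f v ≠ none) with hT
  set S := T.biUnion (fun D => D.filter (fun x => f x = none)) with hS
  have hTds : ∀ D ∈ T, D ∈ ds := fun D hD => (Finset.mem_filter.1 hD).1
  -- S and A are disjoint subsets of UnF
  have hSsub : S ⊆ UnF r f := by
    intro x hx
    rw [hS, Finset.mem_biUnion] at hx
    obtain ⟨D, -, hx⟩ := hx
    exact mem_UnF.2 (Finset.mem_filter.1 hx).2
  have hAsub : A ⊆ UnF r f := fun x hx => mem_UnF.2 (hA x hx).1
  have hdisj : Disjoint A S := by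
    rw [Finset.disjoint_left]
    intro x hxA hxS
    rw [hS, Finset.mem_biUnion] at hxS
    obtain ⟨D, hD, hx⟩ := hxS
    exact (hA x hxA).2 ⟨D, hTds D hD, (Finset.mem_filter.1 hx).1⟩
  have hcard : A.card + S.card ≤ (UnF r f).card := by
    rw [← Finset.card_union_of_disjoint hdisj]
    exact Finset.card_le_card (Finset.union_subset hAsub hSsub)
  -- S.card = sum over T
  have hpw : (T : Set (Finset (Fin (2*r)))).PairwiseDisjoint
      (fun D => D.filter (fun x => f x = none)) := by
    intro D1 h1 D2 h2 hne
    simp only [Function.onFun]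
    rw [Finset.disjoint_left]
    intro x hx1 hx2
    have e1 : D1 = clsF r x := hds D1 (hTds D1 h1) x (Finset.mem_filter.1 hx1).1
    have e2 : D2 = clsF r x := hds D2 (hTds D2 h2) x (Finset.mem_filter.1 hx2).1
    exact hne (e1.trans e2.symm)
  have hScard : S.card = ∑ D ∈ T, (D.filter (fun x => f x = none)).card :=
    Finset.card_biUnion hpw
  -- untouched classes not containing hv are fully unplayed
  have hfull : ∀ D ∈ T, hv ∉ D → (D.filter (fun x => f x = none)).card = 2 := by
    intro D hD hhv
    obtain ⟨hDds, hnf⟩ := Finset.mem_filter.1 hD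
    push_neg at hnf
    obtain ⟨z, hz, hfz⟩ := hnf
    have hDz : D = clsF r z := hds D hDds z hz
    have hall : ∀ y ∈ D, f y = none := by
      intro y hy
      rw [hDz, mem_clsF_iff_pair] at hy
      rcases hy with rfl | rfl
      · exact hfz
      · by_contra hfy
        have hyne : pa r z ≠ hv := fun h => hhv (h ▸ (hDz ▸ pa_mem_clsF r z))
        have hyne' : pa r z ≠ pa r hv := by
          intro h
          have : z = hv := by rw [← pa_pa r z, h, pa_pa]
          exact hhv (this ▸ hz)
        have := hpairs (pa r z) hyne hyne' hfy
        rw [pa_pa] at this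
        exact this hfz
    rw [Finset.filter_true_of_mem hall, hDz, clsF_card]
  by_cases him : InMarked ds hv
  · -- the class of hv is in T
    obtain ⟨D0, hD0ds, hvD0⟩ := him
    have hD0 : D0 = clsF r hv := hds D0 hD0ds hv hvD0
    have hD0T : D0 ∈ T := by
      rw [hT, Finset.mem_filter]
      refine ⟨hD0ds, ?_⟩
      push_neg
      exact ⟨pa r hv, hD0 ▸ pa_mem_clsF r hv, hpar⟩
    have h1 : 1 ≤ (D0.filter (fun x => f x = none)).card := by
      refine Finset.card_pos.2 ⟨pa r hv, ?_⟩
      rw [Finset.mem_filter]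
      exact ⟨hD0 ▸ pa_mem_clsF r hv, hpar⟩
    have hsum : ∑ D ∈ T, (D.filter (fun x => f x = none)).card =
        (D0.filter (fun x => f x = none)).card +
        ∑ D ∈ T.erase D0, (D.filter (fun x => f x = none)).card :=
      (Finset.add_sum_erase T _ hD0T).symm
    have h2 : ∀ D ∈ T.erase D0, (D.filter (fun x => f x = none)).card = 2 := by
      intro D hD
      obtain ⟨hne, hDT⟩ := Finset.mem_erase.1 hD
      refine hfull D hDT (fun hvD => hne ?_)
      rw [hds D (hTds D hDT) hv hvD, ← hD0]
    have hsum2 : ∑ D ∈ T.erase D0, (D.filter (fun x => f x = none)).card =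
        2 * (T.erase D0).card := by
      rw [Finset.sum_congr rfl h2, Finset.sum_const, smul_eq_mul, mul_comm]
    have hTcard : (T.erase D0).card + 1 = T.card := by
      rw [Finset.card_erase_of_mem hD0T]
      have : 0 < T.card := Finset.card_pos.2 ⟨D0, hD0T⟩
      omega
    have him' : InMarked ds hv := ⟨D0, hD0ds, hvD0⟩
    rw [if_pos him']
    omega
  · rw [if_neg him]
    have h2 : ∀ D ∈ T, (D.filter (fun x => f x = none)).card = 2 := by
      intro D hD
      exact hfull D hD (fun hvD => him ⟨D, hTds D hD, hvD⟩)
    have : S.card = 2 * T.card := by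
      rw [hScard, Finset.sum_congr rfl h2, Finset.sum_const, smul_eq_mul, mul_comm]
    omega



lemma adj_res_ne {G : SimpleGraph (Fin (2*r))} (hle : G ≤ SimpleGraph.turanGraph (2*r) r)
    {u v : Fin (2*r)} (h : G.Adj u v) : (u:ℕ) % r ≠ (v:ℕ) % r := by
  have := hle h
  simpa [SimpleGraph.turanGraph] using this

/-- If few colours are forbidden, Maker can colour `w`. -/
lemma exists_legal_color {G : SimpleGraph (Fin (2*r))}
    (hle : G ≤ SimpleGraph.turanGraph (2*r) r) {k : ℕ}
    {g : Fin (2*r) → Option (Option ℕ)} {w : Fin (2*r)} (hw : g w = none)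
    (hcard : (CoF r g \ clsF r w).card < k) :
    ∃ c, BColLegal G (Finset.range k) g w c := by
  classical
  set forb := (Finset.range k).filter
    (fun c => ∃ u, G.Adj w u ∧ g u = some (some c)) with hforb
  have hinj : ∀ c ∈ forb, ∃ u ∈ CoF r g \ clsF r w, g u = some (some c) := by
    intro c hc
    obtain ⟨-, u, hadj, hu⟩ := Finset.mem_filter.1 hc
    refine ⟨u, Finset.mem_sdiff.2 ⟨mem_CoF.2 ⟨c, hu⟩, ?_⟩, hu⟩
    rw [mem_clsF]
    exact fun h => adj_res_ne hle hadj h.symm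
  have hcard2 : forb.card ≤ (CoF r g \ clsF r w).card := by
    choose u hu1 hu2 using hinj
    apply Finset.card_le_card_of_injOn (fun c => if hc : c ∈ forb then u c hc else w)
    · intro c hc
      simp only [Finset.mem_coe] at hc ⊢
      rw [dif_pos hc]
      exact hu1 c hc
    · intro c1 h1 c2 h2 heq
      simp only [Finset.mem_coe] at h1 h2
      have heq' : (if hc : c1 ∈ forb then u c1 hc else w) =
          (if hc : c2 ∈ forb then u c2 hc else w) := heq
      rw [dif_pos h1, dif_pos h2] at heq'
      rename' heq' => heq
      have e1 := hu2 c1 h1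
      have e2 := hu2 c2 h2
      rw [heq, e2] at e1
      exact (Option.some.inj (Option.some.inj e1)).symm
  have hne : (Finset.range k \ forb).Nonempty := by
    rw [← Finset.card_pos, Finset.card_sdiff_of_subset (by rw [hforb]; exact Finset.filter_subset _ _),
      Finset.card_range]
    exact Nat.sub_pos_of_lt (lt_of_le_of_lt hcard2 hcard)
  obtain ⟨c, hc⟩ := hne
  rw [Finset.mem_sdiff] at hc
  refine ⟨c, hc.1, hw, fun u hadj hu => hc.2 ?_⟩
  exact Finset.mem_filter.2 ⟨hc.1, u, hadj, hu⟩

/-- coloured + blanks outside a class are bounded by played outside the class -/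
lemma co_bl_le_pl (g : Fin (2*r) → Option (Option ℕ)) (P : Finset (Fin (2*r))) :
    (CoF r g \ P).card + (BlF r g \ P).card ≤ (PlF r g \ P).card := by
  rw [← Finset.card_union_of_disjoint]
  · apply Finset.card_le_card
    intro x hx
    rw [Finset.mem_union, Finset.mem_sdiff, Finset.mem_sdiff] at hx
    rw [Finset.mem_sdiff, mem_PlF]
    rcases hx with ⟨h1, h2⟩ | ⟨h1, h2⟩
    · obtain ⟨c, hc⟩ := mem_CoF.1 h1
      exact ⟨by simp [hc], h2⟩
    · exact ⟨by simp [mem_BlF.1 h1], h2⟩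
  · rw [Finset.disjoint_left]
    intro a ha hb
    rw [Finset.mem_sdiff, mem_CoF] at ha
    rw [Finset.mem_sdiff, mem_BlF] at hb
    obtain ⟨⟨c, hc⟩, -⟩ := ha
    rw [hb.1] at hc
    simp at hc



lemma pa_inj {u v : Fin (2*r)} (h : pa r u = pa r v) : u = v := by
  rw [← pa_pa r u, h, pa_pa]

lemma mful_update_partner_unplayed {f : Fin (2*r) → Option (Option ℕ)}
    {ds : Finset (Finset (Fin (2*r)))} (hds : ∀ D ∈ ds, ∀ x ∈ D, D = clsF r x)
    {x : Fin (2*r)} (hpax : f (pa r x) = none) (w : Option (Option ℕ)) :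
    mful r (update f x w) ds ≤ mful r f ds := by
  apply Finset.card_le_card
  intro D hD
  rw [Finset.mem_filter] at hD ⊢
  obtain ⟨hD1, hD2⟩ := hD
  refine ⟨hD1, fun y hy => ?_⟩
  have hxD : x ∉ D := by
    intro hxD
    have hDx : D = clsF r x := hds D hD1 x hxD
    have := hD2 (pa r x) (hDx ▸ pa_mem_clsF r x)
    rw [update_of_ne (pa_ne r x)] at this
    exact this hpax
  have := hD2 y hy
  rwa [update_of_ne (fun h => hxD (by rw [← h]; exact hy))] at this

lemma mful_add_split (f : Fin (2*r) → Option (Option ℕ)) (ds : Finset (Finset (Fin (2*r)))) :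
    mful r f ds + (ds.filter (fun D => ¬ ∀ v ∈ D, f v ≠ none)).card = ds.card :=
  Finset.card_filter_add_card_filter_not _

/-- invariant at Maker's turn: all classes full or empty -/
structure InvA (r s : ℕ) (ι : Fin s → Fin r) (f : Fin (2*r) → Option (Option ℕ))
    (ds : Finset (Finset (Fin (2*r)))) : Prop where
  sub : ds ⊆ DS r s ι
  pairs : ∀ v, f v ≠ none → f (pa r v) ≠ none
  count : s + mful r f ds ≤ (BlF r f).card + ds.card

/-- invariant at Breaker's turn: exactly one half-open class, that of `hv` -/
structure InvB (r s : ℕ) (ι : Fin s → Fin r) (f : Fin (2*r) → Option (Option ℕ))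
    (ds : Finset (Finset (Fin (2*r)))) (hv : Fin (2*r)) : Prop where
  sub : ds ⊆ DS r s ι
  hpl : f hv ≠ none
  hpar : f (pa r hv) = none
  pairs : ∀ v, v ≠ hv → v ≠ pa r hv → f v ≠ none → f (pa r v) ≠ none
  hblank : InMarked ds hv → f hv = some none
  count : s + mful r f ds ≤ ((BlF r f).erase hv).card + ds.card

/-- The partner of any unplayed vertex (other than the exceptional one) is unplayed. -/
lemma InvB.partner_unplayed {s : ℕ} {ι : Fin s → Fin r} {f ds hv}
    (inv : InvB r s ι f ds hv) {v : Fin (2*r)} (hv0 : f v = none) (h2 : v ≠ pa r hv) :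
    f (pa r v) = none := by
  by_cases h1 : v = hv
  · exact absurd (h1 ▸ hv0) inv.hpl
  by_contra hp
  have hne1 : pa r v ≠ hv := fun h => h2 (by rw [← pa_pa r v, h])
  have hne2 : pa r v ≠ pa r hv := fun h => h1 (pa_inj h)
  have := inv.pairs (pa r v) hne1 hne2 hp
  rw [pa_pa] at this
  exact this hv0

/-- CA3: the key counting bound enabling Maker to colour the partner of a fresh
vertex played by Breaker. -/
lemma CA3_bound {s : ℕ} {ι : Fin s → Fin r} {f ds hv}
    (inv : InvB r s ι f ds hv) {v : Fin (2*r)} (hv0 : f v = none)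
    (h1 : v ≠ hv) (h2 : v ≠ pa r hv) (hnm : ¬ InMarked ds v) :
    (CoF r f).card < 2*r - s - 1 := by
  classical
  have hds := hds_of_subset inv.sub
  have hpav : f (pa r v) = none := inv.partner_unplayed hv0 h2
  have hnm' : ¬ InMarked ds (pa r v) := fun h => hnm ((InMarked_pa hds).1 h)
  have hT := mful_add_split f ds
  set T := ds.filter (fun D => ¬ ∀ x ∈ D, f x ≠ none) with hTdef
  have hCoBl := CoF_card_add_BlF_card f
  have hPlUn := PlF_card_add_UnF_card f
  have hBl : ((BlF r f).erase hv).card ≤ (BlF r f).card :=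
    Finset.card_le_card (Finset.erase_subset _ _)
  have hcount := inv.count
  by_cases him : InMarked ds hv
  · -- hv blank, its class untouched
    have hvH : hv ∈ BlF r f := mem_BlF.2 (inv.hblank him)
    have hBl2 : ((BlF r f).erase hv).card + 1 = (BlF r f).card := by
      rw [Finset.card_erase_of_mem hvH]
      have : 0 < (BlF r f).card := Finset.card_pos.2 ⟨hv, hvH⟩
      omega
    have hTpos : 1 ≤ T.card := by
      refine Finset.card_pos.2 ⟨clsF r hv, ?_⟩
      rw [hTdef, Finset.mem_filter]
      refine ⟨(InMarked_iff hds).1 him, ?_⟩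
      push_neg
      exact ⟨pa r hv, pa_mem_clsF r hv, inv.hpar⟩
    have hUL := UL hds inv.pairs inv.hpar {v, pa r v} ?_
    · rw [if_pos him, ← hTdef] at hUL
      have hA : ({v, pa r v} : Finset (Fin (2*r))).card = 2 := clsF_card r v
      rw [hA] at hUL
      omega
    · intro x hx
      rcases Finset.mem_insert.1 hx with rfl | hx
      · exact ⟨hv0, hnm⟩
      · rw [Finset.mem_singleton] at hx
        subst hx
        exact ⟨hpav, hnm'⟩
  · -- hv's class unmarked; pa hv is an extra unplayed unmarked vertex
    have hnmp : ¬ InMarked ds (pa r hv) := fun h => him ((InMarked_pa hds).1 h)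
    have hUL := UL hds inv.pairs inv.hpar {v, pa r v, pa r hv} ?_
    · rw [if_neg him, ← hTdef] at hUL
      have hA : ({v, pa r v, pa r hv} : Finset (Fin (2*r))).card = 3 := by
        rw [Finset.card_insert_of_notMem, Finset.card_insert_of_notMem, Finset.card_singleton]
        · simp only [Finset.mem_singleton]
          exact fun h => h1 (pa_inj h)
        · simp only [Finset.mem_insert, Finset.mem_singleton]
          push_neg
          exact ⟨fun h => pa_ne r v h.symm, h2⟩
      rw [hA] at hUL
      omega
    · intro x hx
      rcases Finset.mem_insert.1 hx with rfl | hx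
      · exact ⟨hv0, hnm⟩
      rcases Finset.mem_insert.1 hx with rfl | hx
      · exact ⟨hpav, hnm'⟩
      · rw [Finset.mem_singleton] at hx
        subst hx
        exact ⟨inv.hpar, hnmp⟩



lemma InMarked_mono {W : Type*} {ds2 ds : Finset (Finset W)} (h : ds2 ⊆ ds) {v : W}
    (hm : InMarked ds2 v) : InMarked ds v := by
  obtain ⟨D, hD, hvD⟩ := hm
  exact ⟨D, h hD, hvD⟩

lemma mful_mono {f : Fin (2*r) → Option (Option ℕ)} {ds2 ds : Finset (Finset (Fin (2*r)))}
    (h : ds2 ⊆ ds) : mful r f ds2 ≤ mful r f ds :=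
  Finset.card_le_card (Finset.filter_subset_filter _ h)

lemma unf_step {f : Fin (2*r) → Option (Option ℕ)} {y : Fin (2*r)} (hy : f y = none)
    {m : ℕ} (h : (UnF r f).card ≤ m + 1) (w : Option ℕ) :
    (UnF r (update f y (some w))).card ≤ m := by
  have := UnF_update_card hy w
  omega

/-- Invariant transfer when the half-open class is closed (Breaker plays `pa hv`). -/
lemma closeInv {s : ℕ} {ι : Fin s → Fin r} {f ds hv}
    (inv : InvB r s ι f ds hv) (z : Option ℕ) {ds2 : Finset (Finset (Fin (2*r)))}
    (hzds : ds2 = ds ∨ (z = none ∧ ∃ d ∈ ds, ds2 = ds.erase d)) :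
    InvA r s ι (update f (pa r hv) (some z)) ds2 := by
  classical
  have hds := hds_of_subset inv.sub
  have hsub2 : ds2 ⊆ ds := by
    rcases hzds with rfl | ⟨-, d, -, rfl⟩
    · exact Finset.Subset.refl _
    · exact Finset.erase_subset _ _
  set g := update f (pa r hv) (some z) with hg
  have hne : hv ≠ pa r hv := fun h => pa_ne r hv h.symm
  refine ⟨hsub2.trans inv.sub, ?_, ?_⟩
  · -- pairs
    intro w hw
    by_cases hw1 : w = hv
    · subst hw1
      rw [hg, update_self]
      simp
    by_cases hw2 : w = pa r hv
    · subst hw2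
      rw [hg, pa_pa, update_of_ne hne]
      exact inv.hpl
    · rw [hg, update_of_ne hw2] at hw
      rw [hg, update_of_ne (fun h => hw1 (pa_inj h))]
      exact inv.pairs w hw1 hw2 hw
  · -- count
    have hmful2 : mful r g ds2 ≤ mful r g ds := mful_mono hsub2
    have hcount := inv.count
    have hBle : ((BlF r f).erase hv).card ≤ (BlF r f).card :=
      Finset.card_le_card (Finset.erase_subset _ _)
    have hmg : mful r g ds ≤ mful r f ds + 1 := by
      refine mful_le_aux hds (v := pa r hv) ?_
      intro x hgx hfx
      by_cases hx : x = pa r hv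
      · exact hx ▸ self_mem_clsF r (pa r hv)
      · rw [hg, update_of_ne hx] at hgx
        exact absurd hfx hgx
    by_cases him : InMarked ds hv
    · have hvBl : hv ∈ BlF r f := mem_BlF.2 (inv.hblank him)
      have hBl2 : ((BlF r f).erase hv).card + 1 = (BlF r f).card := by
        rw [Finset.card_erase_of_mem hvBl]
        have : 0 < (BlF r f).card := Finset.card_pos.2 ⟨hv, hvBl⟩
        omega
      rcases hzds with rfl | ⟨hz, d, hd, rfl⟩
      · have hBg : (BlF r f).card ≤ (BlF r g).card := by
          apply Finset.card_le_card
          intro y hy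
          rw [mem_BlF] at hy ⊢
          rw [hg, update_of_ne (fun h => by rw [h, inv.hpar] at hy; simp at hy)]
          exact hy
        omega
      · subst hz
        have hBg : (BlF r g).card = (BlF r f).card + 1 := by
          rw [hg, BlF_card_update_blank inv.hpar]
        have hdsc : (ds.erase d).card + 1 ≤ ds.card + 1 := by
          have := Finset.card_erase_of_mem hd
          have : (ds.erase d).card ≤ ds.card := Finset.card_le_card (Finset.erase_subset _ _)
          omega
        have := Finset.card_erase_of_mem hd
        have hpos : 0 < ds.card := Finset.card_pos.2 ⟨d, hd⟩
        omega
    · -- hv's class not marked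
      have himp : ¬ InMarked ds (pa r hv) := fun h => him ((InMarked_pa hds).1 h)
      have hmg' : mful r g ds ≤ mful r f ds := by
        refine mful_le_aux' hds (v := pa r hv) ?_ himp
        intro x hgx hfx
        by_cases hx : x = pa r hv
        · exact hx ▸ self_mem_clsF r (pa r hv)
        · rw [hg, update_of_ne hx] at hgx
          exact absurd hfx hgx
      rcases hzds with rfl | ⟨hz, d, hd, rfl⟩
      · have hBg : (BlF r f).card ≤ (BlF r g).card := by
          apply Finset.card_le_card
          intro y hy
          rw [mem_BlF] at hy ⊢
          rw [hg, update_of_ne (fun h => by rw [h, inv.hpar] at hy; simp at hy)]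
          exact hy
        omega
      · subst hz
        have hBg : (BlF r g).card = (BlF r f).card + 1 := by
          rw [hg, BlF_card_update_blank inv.hpar]
        have := Finset.card_erase_of_mem hd
        have hpos : 0 < ds.card := Finset.card_pos.2 ⟨d, hd⟩
        omega



/-- Maker's pairing reply when Breaker plays at a vertex of a fresh class. -/
lemma freshReply {s : ℕ} {ι : Fin s → Fin r} {G : SimpleGraph (Fin (2*r))}
    (hle : G ≤ SimpleGraph.turanGraph (2*r) r) {m : ℕ}
    (HB : ∀ m2, m2 < m → ∀ f ds hv, (UnF r f).card ≤ m2 → InvB r s ι f ds hv →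
      MakerWinsM G (Finset.range (2*r-s-1)) m2 f ds false)
    {f : Fin (2*r) → Option (Option ℕ)} {ds : Finset (Finset (Fin (2*r)))}
    {hv : Fin (2*r)} (inv : InvB r s ι f ds hv) {v : Fin (2*r)} (hv0 : f v = none)
    (h2 : v ≠ pa r hv) (z : Option ℕ) {ds2 : Finset (Finset (Fin (2*r)))}
    (hzds : ds2 = ds ∨ (z = none ∧ ∃ d ∈ ds, v ∉ d ∧ ds2 = ds.erase d))
    (hfuel : (UnF r f).card ≤ m + 1) :
    MakerWinsM G (Finset.range (2*r-s-1)) m (update f v (some z)) ds2 true := by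
  classical
  have hds := hds_of_subset inv.sub
  have h1 : v ≠ hv := fun h => inv.hpl (h ▸ hv0)
  have hpav : f (pa r v) = none := inv.partner_unplayed hv0 h2
  have hsub2 : ds2 ⊆ ds := by
    rcases hzds with rfl | ⟨-, d, -, -, rfl⟩
    · exact Finset.Subset.refl _
    · exact Finset.erase_subset _ _
  have hds2' := hds_of_subset (hsub2.trans inv.sub)
  have hIMiff : InMarked ds2 v ↔ InMarked ds v := by
    constructor
    · exact InMarked_mono hsub2
    · rintro ⟨D, hD, hvD⟩
      rcases hzds with rfl | ⟨-, d, hd, hvd, rfl⟩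
      · exact ⟨D, hD, hvD⟩
      · exact ⟨D, Finset.mem_erase.2 ⟨fun h => hvd (h ▸ hvD), hD⟩, hvD⟩
  set g1 := update f v (some z) with hg1
  have hg1pav : g1 (pa r v) = none := by
    rw [hg1, update_of_ne (pa_ne r v)]
    exact hpav
  have hUn1 : (UnF r g1).card ≤ m := by
    rw [hg1]; exact unf_step hv0 hfuel z
  have hm1 : 1 ≤ m := le_trans (Finset.card_pos.2 ⟨pa r v, mem_UnF.2 hg1pav⟩) hUn1
  obtain ⟨m2, rfl⟩ : ∃ m2, m = m2 + 1 := ⟨m - 1, by omega⟩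
  rw [MakerWinsM]
  refine Or.inr ?_
  -- facts common to both replies
  have hvnpv : hv ≠ pa r v := fun h => h2 (by rw [h, pa_pa])
  have hvnv : hv ≠ v := fun h => h1 h.symm
  have hpahvnpav : pa r hv ≠ pa r v := fun h => hvnv (pa_inj h)
  have hpahvnv : pa r hv ≠ v := fun h => h2 h.symm
  have hcount := inv.count
  have hds2card : ds2.card + (if ds2 = ds then 0 else 1) = ds.card := by
    rcases hzds with rfl | ⟨-, d, hd, -, rfl⟩
    · simp
    · rcases eq_or_ne (ds.erase d) ds with he | he
      · rw [he]; simp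
      · rw [if_neg he, Finset.card_erase_of_mem hd]
        have : 0 < ds.card := Finset.card_pos.2 ⟨d, hd⟩
        omega
  have hvnotBl : v ∉ BlF r f := fun h => by rw [mem_BlF, hv0] at h; simp at h
  have hpavnotBlg1 : pa r v ∉ BlF r g1 := fun h => by
    rw [mem_BlF, hg1pav] at h; simp at h
  -- blanks of g1
  have hBlg1 : ((BlF r g1).erase hv).card =
      ((BlF r f).erase hv).card + (if z = none then 1 else 0) := by
    cases z with
    | none =>
      rw [if_pos rfl, hg1, BlF_update_blank hv0, Finset.erase_insert_of_ne hvnv.symm,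
        Finset.card_insert_of_notMem (fun h => hvnotBl (Finset.mem_of_mem_erase h))]
    | some c =>
      rw [if_neg (by simp), hg1, BlF_update_col c hv0]
      omega
  have hBlg1' : ((BlF r f).erase hv).card ≤ ((BlF r g1).erase hv).card := by
    rw [hBlg1]; split <;> omega
  have hfg1 : ∀ x, x ≠ v → g1 x = f x := fun x hx => by rw [hg1, update_of_ne hx]
  by_cases hIM : InMarked ds2 v
  · -- Maker blanks pa v
    have hIMpa : InMarked ds2 (pa r v) := (InMarked_pa hds2').2 hIM
    refine ⟨fun hE => hE.2 (pa r v) hIMpa hg1pav, Or.inr ⟨pa r v, hg1pav, hIMpa, ?_⟩⟩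
    set g2 := update g1 (pa r v) (some none) with hg2
    have hg2hv : g2 hv = f hv := by
      rw [hg2, update_of_ne hvnpv, hg1, update_of_ne hvnv]
    apply HB m2 (by omega) g2 ds2 hv ?_ ?_
    · rw [hg2]; exact unf_step hg1pav hUn1 none
    · refine ⟨hsub2.trans inv.sub, ?_, ?_, ?_, ?_, ?_⟩
      · rw [hg2hv]; exact inv.hpl
      · rw [hg2, update_of_ne hpahvnpav, hg1, update_of_ne hpahvnv]
        exact inv.hpar
      · intro w hw1 hw2 hwpl
        by_cases hwv : w = v
        · subst hwv
          rw [hg2, update_self]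
          simp
        by_cases hwpv : w = pa r v
        · subst hwpv
          rw [hg2, pa_pa, update_of_ne (fun h => pa_ne r v h.symm), hg1, update_self]
          simp
        · rw [hg2, update_of_ne hwpv, hg1, update_of_ne hwv] at hwpl
          rw [hg2, update_of_ne (fun h => hwv (pa_inj h)), hg1,
            update_of_ne (fun h => hwpv (by rw [← pa_pa r w, h]))]
          exact inv.pairs w hw1 hw2 hwpl
      · intro him2
        rw [hg2hv]
        exact inv.hblank (InMarked_mono hsub2 him2)
      · -- count
        have hBg2 : ((BlF r g2).erase hv).card = ((BlF r g1).erase hv).card + 1 := by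
          rw [hg2, BlF_update_blank hg1pav, Finset.erase_insert_of_ne hvnpv.symm,
            Finset.card_insert_of_notMem (fun h => hpavnotBlg1 (Finset.mem_of_mem_erase h))]
        have hmf : mful r g2 ds2 ≤ mful r f ds2 + 1 := by
          refine mful_le_aux hds2' (v := v) ?_
          intro x hgx hfx
          by_cases hxv : x = v
          · rw [hxv]; exact self_mem_clsF r v
          by_cases hxpv : x = pa r v
          · rw [hxpv]; exact pa_mem_clsF r v
          · rw [hg2, update_of_ne hxpv, hg1, update_of_ne hxv] at hgx
            exact absurd hfx hgx
        have hmf2 : mful r f ds2 ≤ mful r f ds := mful_mono hsub2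
        rcases hzds with rfl | ⟨hz, d, hd, hvd, rfl⟩
        · omega
        · subst hz
          have hB1 : ((BlF r g1).erase hv).card = ((BlF r f).erase hv).card + 1 := by
            simpa using hBlg1
          have hdc : (ds.erase d).card + 1 = ds.card := by
            rw [Finset.card_erase_of_mem hd]
            have : 0 < ds.card := Finset.card_pos.2 ⟨d, hd⟩
            omega
          omega
  · -- Maker colours pa v
    have hnm : ¬ InMarked ds v := fun h => hIM (hIMiff.2 h)
    have hbound := CA3_bound inv hv0 h1 h2 hnm
    have hboundg1 : (CoF r g1 \ clsF r (pa r v)).card < 2*r - s - 1 := by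
      refine lt_of_le_of_lt (Finset.card_le_card ?_) hbound
      intro x hx
      obtain ⟨hxc, hxn⟩ := Finset.mem_sdiff.1 hx
      have hxv : x ≠ v := by
        intro h
        subst h
        exact hxn (by rw [clsF_pa]; exact self_mem_clsF r x)
      rw [mem_CoF] at hxc ⊢
      rwa [hg1, update_of_ne hxv] at hxc
    obtain ⟨c2, hc2⟩ := exists_legal_color hle hg1pav hboundg1
    refine ⟨fun hE => hE.1 ⟨pa r v, c2, hc2⟩, Or.inl ⟨pa r v, c2, hc2, ?_⟩⟩
    set g2 := update g1 (pa r v) (some (some c2)) with hg2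
    have hg2hv : g2 hv = f hv := by
      rw [hg2, update_of_ne hvnpv, hg1, update_of_ne hvnv]
    apply HB m2 (by omega) g2 ds2 hv ?_ ?_
    · rw [hg2]; exact unf_step hg1pav hUn1 (some c2)
    · refine ⟨hsub2.trans inv.sub, ?_, ?_, ?_, ?_, ?_⟩
      · rw [hg2hv]; exact inv.hpl
      · rw [hg2, update_of_ne hpahvnpav, hg1, update_of_ne hpahvnv]
        exact inv.hpar
      · intro w hw1 hw2 hwpl
        by_cases hwv : w = v
        · subst hwv
          rw [hg2, update_self]
          simp
        by_cases hwpv : w = pa r v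
        · subst hwpv
          rw [hg2, pa_pa, update_of_ne (fun h => pa_ne r v h.symm), hg1, update_self]
          simp
        · rw [hg2, update_of_ne hwpv, hg1, update_of_ne hwv] at hwpl
          rw [hg2, update_of_ne (fun h => hwv (pa_inj h)), hg1,
            update_of_ne (fun h => hwpv (by rw [← pa_pa r w, h]))]
          exact inv.pairs w hw1 hw2 hwpl
      · intro him2
        rw [hg2hv]
        exact inv.hblank (InMarked_mono hsub2 him2)
      · -- count
        have hBg2 : BlF r g2 = BlF r g1 := by
          rw [hg2]; exact BlF_update_col c2 hg1pav
        have hmf : mful r g2 ds2 ≤ mful r f ds2 := by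
          refine mful_le_aux' hds2' (v := v) ?_ hIM
          intro x hgx hfx
          by_cases hxv : x = v
          · rw [hxv]; exact self_mem_clsF r v
          by_cases hxpv : x = pa r v
          · rw [hxpv]; exact pa_mem_clsF r v
          · rw [hg2, update_of_ne hxpv, hg1, update_of_ne hxv] at hgx
            exact absurd hfx hgx
        have hmf2 : mful r f ds2 ≤ mful r f ds := mful_mono hsub2
        rw [hBg2]
        rcases hzds with rfl | ⟨hz, d, hd, hvd, rfl⟩
        · omega
        · subst hz
          have hB1 : ((BlF r g1).erase hv).card = ((BlF r f).erase hv).card + 1 := by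
            simpa using hBlg1
          have hdc : (ds.erase d).card + 1 = ds.card := by
            rw [Finset.card_erase_of_mem hd]
            have : 0 < ds.card := Finset.card_pos.2 ⟨d, hd⟩
            omega
          omega



theorem mainInd {s : ℕ} {ι : Fin s → Fin r} {G : SimpleGraph (Fin (2*r))}
    (hle : G ≤ SimpleGraph.turanGraph (2*r) r) :
    ∀ fuel : ℕ,
      (∀ f ds, (UnF r f).card ≤ fuel → InvA r s ι f ds →
        MakerWinsM G (Finset.range (2*r-s-1)) fuel f ds true) ∧
      (∀ f ds hv, (UnF r f).card ≤ fuel → InvB r s ι f ds hv →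
        MakerWinsM G (Finset.range (2*r-s-1)) fuel f ds false) := by
  intro fuel
  induction fuel using Nat.strong_induction_on with
  | _ fuel IH =>
  constructor
  · -- Maker's turn from a type-A position
    intro f ds hfuel inv
    have hds := hds_of_subset inv.sub
    by_cases hall : AllPlayed f
    · cases fuel with
      | zero => rw [MakerWinsM]; exact hall
      | succ m =>
        rw [MakerWinsM]
        exact Or.inl ⟨⟨fun ⟨v, c, hc⟩ => hall v hc.2.1, fun v _ => hall v⟩, hall⟩
    · obtain ⟨w0, hw0⟩ : ∃ w, f w = none := by
        by_contra h
        push_neg at h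
        exact hall h
      have hUpos : 1 ≤ (UnF r f).card := Finset.card_pos.2 ⟨w0, mem_UnF.2 hw0⟩
      obtain ⟨m, rfl⟩ : ∃ m, fuel = m + 1 := ⟨fuel - 1, by omega⟩
      rw [MakerWinsM]
      refine Or.inr ?_
      by_cases hm : ∃ D ∈ ds, ∃ x ∈ D, f x = none
      · -- blank-open an untouched marked class
        obtain ⟨D, hD, x, hxD, hfx⟩ := hm
        have hIM : InMarked ds x := ⟨D, hD, hxD⟩
        have hpax : f (pa r x) = none := by
          by_contra hp
          have := inv.pairs (pa r x) hp
          rw [pa_pa] at this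
          exact this hfx
        refine ⟨fun hE => hE.2 x hIM hfx, Or.inr ⟨x, hfx, hIM, ?_⟩⟩
        apply (IH m (by omega)).2 _ ds x (unf_step hfx hfuel none) ?_
        refine ⟨inv.sub, ?_, ?_, ?_, ?_, ?_⟩
        · rw [update_self]; simp
        · rw [update_of_ne (pa_ne r x)]; exact hpax
        · intro w hw1 hw2 hwpl
          rw [update_of_ne hw1] at hwpl
          rw [update_of_ne (fun h => hw2 (by rw [← pa_pa r w, h]))]
          exact inv.pairs w hwpl
        · intro _; rw [update_self]
        · have hxBl : x ∉ BlF r f := fun h => by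
            rw [mem_BlF, hfx] at h; simp at h
          have hBe : (BlF r (update f x (some none))).erase x = BlF r f := by
            rw [BlF_update_blank hfx, Finset.erase_insert hxBl]
          have hmf : mful r (update f x (some none)) ds ≤ mful r f ds :=
            mful_update_partner_unplayed hds hpax _
          have := inv.count
          rw [hBe]
          omega
      · -- colour-open a fresh class
        push_neg at hm
        have hpaw0 : f (pa r w0) = none := by
          by_contra hp
          have := inv.pairs (pa r w0) hp
          rw [pa_pa] at this
          exact this hw0
        have hmfull : mful r f ds = ds.card := by
          rw [mful, Finset.filter_true_of_mem hm]
        have hU2 : 2 ≤ (UnF r f).card := by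
          have hsub : clsF r w0 ⊆ UnF r f := by
            intro y hy
            rcases (mem_clsF_iff_pair r y w0).1 hy with rfl | rfl
            · exact mem_UnF.2 hw0
            · exact mem_UnF.2 hpaw0
          have := Finset.card_le_card hsub
          rwa [clsF_card] at this
        have hCoBl := CoF_card_add_BlF_card f
        have hPlUn := PlF_card_add_UnF_card f
        have hsd : (CoF r f \ clsF r w0).card ≤ (CoF r f).card :=
          Finset.card_le_card Finset.sdiff_subset
        have hcount := inv.count
        have hbound : (CoF r f \ clsF r w0).card < 2*r - s - 1 := by omega
        obtain ⟨c, hc⟩ := exists_legal_color hle hw0 hbound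
        refine ⟨fun hE => hE.1 ⟨w0, c, hc⟩, Or.inl ⟨w0, c, hc, ?_⟩⟩
        apply (IH m (by omega)).2 _ ds w0 (unf_step hw0 hfuel (some c)) ?_
        refine ⟨inv.sub, ?_, ?_, ?_, ?_, ?_⟩
        · rw [update_self]; simp
        · rw [update_of_ne (pa_ne r w0)]; exact hpaw0
        · intro w hw1 hw2 hwpl
          rw [update_of_ne hw1] at hwpl
          rw [update_of_ne (fun h => hw2 (by rw [← pa_pa r w, h]))]
          exact inv.pairs w hwpl
        · intro hIMw
          obtain ⟨D, hD, hw0D⟩ := hIMw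
          exact absurd hw0 (hm D hD w0 hw0D)
        · have hw0Bl : w0 ∉ BlF r f := fun h => by
            rw [mem_BlF, hw0] at h; simp at h
          have hBe : (BlF r (update f w0 (some (some c)))).erase w0 = BlF r f := by
            rw [BlF_update_col c hw0, Finset.erase_eq_of_notMem hw0Bl]
          have hmf : mful r (update f w0 (some (some c))) ds ≤ mful r f ds :=
            mful_update_partner_unplayed hds hpaw0 _
          rw [hBe]
          have := inv.count
          omega
  · -- Breaker's turn from a type-B position
    intro f ds hv hfuel inv
    have hds := hds_of_subset inv.sub
    have hpar := inv.hpar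
    have hr1 : 1 ≤ r := by have := hv.isLt; omega
    have hUpos : 1 ≤ (UnF r f).card := Finset.card_pos.2 ⟨pa r hv, mem_UnF.2 hpar⟩
    obtain ⟨m, rfl⟩ : ∃ m, fuel = m + 1 := ⟨fuel - 1, by omega⟩
    have HB : ∀ m2, m2 < m → ∀ f' ds' hv', (UnF r f').card ≤ m2 → InvB r s ι f' ds' hv' →
        MakerWinsM G (Finset.range (2*r-s-1)) m2 f' ds' false :=
      fun m2 hm2 => (IH m2 (by omega)).2
    rw [MakerWinsM]
    refine Or.inr ⟨?_, ?_, ?_⟩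
    · -- the game has not ended
      by_cases hmm : ∃ D ∈ ds, ∃ x ∈ D, f x = none
      · obtain ⟨D, hD, x, hxD, hfx⟩ := hmm
        exact fun hE => hE.2 x ⟨D, hD, hxD⟩ hfx
      · push_neg at hmm
        have hmfull : mful r f ds = ds.card := by
          rw [mful, Finset.filter_true_of_mem hmm]
        have hBlcls : BlF r f \ clsF r hv = (BlF r f).erase hv := by
          ext y
          constructor
          · intro h
            obtain ⟨h1, h2⟩ := Finset.mem_sdiff.1 h
            exact Finset.mem_erase.2 ⟨fun he => h2 (by rw [he]; exact self_mem_clsF r hv), h1⟩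
          · intro h
            obtain ⟨h1, h2⟩ := Finset.mem_erase.1 h
            refine Finset.mem_sdiff.2 ⟨h2, fun hc => ?_⟩
            rcases (mem_clsF_iff_pair r y hv).1 hc with rfl | rfl
            · exact h1 rfl
            · rw [mem_BlF, hpar] at h2
              simp at h2
        have hchain := co_bl_le_pl f (clsF r hv)
        have hPl : (PlF r f \ clsF r hv).card ≤ 2*r - 2 := by
          have hsub : PlF r f \ clsF r hv ⊆ Finset.univ \ clsF r hv :=
            Finset.sdiff_subset_sdiff (Finset.subset_univ _) (Finset.Subset.refl _)
          have h1 := Finset.card_le_card hsub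
          rwa [Finset.card_sdiff_of_subset (Finset.subset_univ _), Finset.card_univ, Fintype.card_fin,
            clsF_card] at h1
        have hcount := inv.count
        rw [hBlcls] at hchain
        have hbound : (CoF r f \ clsF r hv).card < 2*r - s - 1 := by omega
        obtain ⟨c, hc⟩ := exists_legal_color hle hpar (by rw [clsF_pa]; exact hbound)
        exact fun hE => hE.1 ⟨pa r hv, c, hc⟩
    · -- Breaker colours
      intro v c hleg
      obtain ⟨hcK, hv0, hprop⟩ := hleg
      by_cases hvv : v = pa r hv
      · subst hvv
        exact (IH m (by omega)).1 _ ds (unf_step hv0 hfuel _) (closeInv inv (some c) (Or.inl rfl))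
      · exact freshReply hle HB inv hv0 hvv (some c) (Or.inl rfl) hfuel
    · -- Breaker blanks (with or without removing a marked class)
      intro v hv0
      constructor
      · by_cases hvv : v = pa r hv
        · subst hvv
          exact (IH m (by omega)).1 _ ds (unf_step hv0 hfuel _) (closeInv inv none (Or.inl rfl))
        · exact freshReply hle HB inv hv0 hvv none (Or.inl rfl) hfuel
      · intro d hd hvd
        by_cases hvv : v = pa r hv
        · subst hvv
          exact (IH m (by omega)).1 _ _ (unf_step hv0 hfuel _)
            (closeInv inv none (Or.inr ⟨rfl, d, hd, rfl⟩))
        · exact freshReply hle HB inv hv0 hvv none (Or.inr ⟨rfl, d, hd, hvd, rfl⟩) hfuel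


/-- If `G` is a spanning subgraph of the Turán graph `T(2r,r)` and
`D₁,…,Dₛ` are some `s` of the `r` size-2 colour classes of `T(2r,r)`, then
`χ_gb(G; D₁,…,Dₛ) ≤ 2r − s − 1`. -/
theorem chiGbM_le_of_subgraph_turan (r : ℕ) (hr : 1 ≤ r)
    (G : SimpleGraph (Fin (2 * r)))
    (hle : G ≤ SimpleGraph.turanGraph (2 * r) r)
    {s : ℕ} (ι : Fin s → Fin r) (hι : Function.Injective ι) :
    chiGbM G (Finset.image
        (fun j => Finset.univ.filter (fun v : Fin (2 * r) => (v : ℕ) % r = (ι j : ℕ)))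
        Finset.univ) ≤
      2 * r - s - 1 := by
  classical
  apply Nat.sInf_le
  show MakerWinsM G (Finset.range (2*r - s - 1)) (Fintype.card (Fin (2*r)))
    (fun _ => none) (DS r s ι) true
  apply (mainInd hle (Fintype.card (Fin (2*r)))).1
  · have hU : UnF r (fun _ => none) = Finset.univ := by
      ext v; simp [mem_UnF]
    rw [hU, Finset.card_univ]
  · refine ⟨Finset.Subset.refl _, fun v h => absurd rfl h, ?_⟩
    have hBl : BlF r (fun _ => none) = (∅ : Finset (Fin (2*r))) := by
      ext v; simp [mem_BlF]
    have hmf : mful r (fun _ => none) (DS r s ι) = 0 := by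
      rw [mful, Finset.card_eq_zero, Finset.filter_eq_empty_iff]
      intro D hD
      obtain ⟨v, hv⟩ := DS_nonempty r s ι hr hD
      exact fun hfull => hfull v hv rfl
    rw [hBl, hmf, DS_card r s ι hr hι]
    simp

end GameCol
end
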